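/- arXiv:1311.7522 — 4 statements merged into one kernel-verified Lean document; each statement's English description precedes it below -/
import Mathlib

section
/- Let n, c ≥ 1 and let F : ℂ^n × ℂ^n × ℂ^c → ℂ be holomorphic in a neighborhood of the origin (variables (z, ζ, ν)). Then F(z, conj z, u) is a real number for all z in a neighborhood of 0 in ℂ^n and all u in a neighborhood of 0 in ℝ^c if and only if conj(F(z, ζ, ν)) = F(conj ζ, conj z, conj ν) for all (z, ζ, ν) in a neighborhood of the origin of ℂ^n × ℂ^n × ℂ^c. -/
open Complex Filter Topology ComplexConjugate
open scoped NNReal ENNReal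

namespace Stmt1Aux

variable {n c : ℕ}

abbrev PSp (n c : ℕ) := (Fin n → ℂ) × (Fin n → ℂ) × (Fin c → ℂ)
abbrev RSp (n c : ℕ) := (Fin n → ℝ) × (Fin n → ℝ) × (Fin c → ℝ)

/-- The antiholomorphic involution `(z, ζ, ν) ↦ (conj ζ, conj z, conj ν)`. -/
def τ (p : PSp n c) : PSp n c :=
  (fun i => conj (p.2.1 i), fun i => conj (p.1 i), fun j => conj (p.2.2 j))

lemma τ_add (x y : PSp n c) : τ (x + y) = τ x + τ y := by
  simp only [τ, Prod.fst_add, Prod.snd_add, Pi.add_apply, map_add]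
  rfl

lemma τ_smul (a : ℂ) (x : PSp n c) : τ (a • x) = conj a • τ x := by
  simp only [τ, Prod.smul_fst, Prod.smul_snd, Pi.smul_apply, smul_eq_mul, map_mul]
  rfl

lemma norm_conj_pi {m : ℕ} (x : Fin m → ℂ) : ‖(fun i => conj (x i))‖ = ‖x‖ := by
  simp only [Pi.norm_def]
  congr 1
  refine Finset.sup_congr rfl fun i _ => ?_
  rw [starRingEnd_apply, nnnorm_star]

lemma τ_norm (p : PSp n c) : ‖τ p‖ = ‖p‖ := by
  obtain ⟨z, ζ, ν⟩ := p
  simp only [τ, Prod.norm_def, norm_conj_pi]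
  rw [max_left_comm, max_comm ‖z‖]

lemma τ_nnnorm (p : PSp n c) : ‖τ p‖₊ = ‖p‖₊ :=
  NNReal.coe_injective (by simpa using τ_norm p)


/-- conjugate a continuous multilinear map through `τ`. -/
noncomputable def conjCMM {k : ℕ} (f : ContinuousMultilinearMap ℂ (fun _ : Fin k => PSp n c) ℂ) :
    ContinuousMultilinearMap ℂ (fun _ : Fin k => PSp n c) ℂ :=
  MultilinearMap.mkContinuous
    { toFun := fun v => conj (f fun i => τ (v i))
      map_update_add' := by
        intro inst v j x y
        have E : ∀ w : PSp n c, (fun i => τ (Function.update v j w i))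
            = Function.update (fun i => τ (v i)) j (τ w) :=
          fun w => funext (Function.apply_update (fun _ => τ) v j w)
        rw [E (x + y), E x, E y, τ_add, f.map_update_add, map_add]
      map_update_smul' := by
        intro inst v j a x
        have E : ∀ w : PSp n c, (fun i => τ (Function.update v j w i))
            = Function.update (fun i => τ (v i)) j (τ w) :=
          fun w => funext (Function.apply_update (fun _ => τ) v j w)
        rw [E (a • x), E x, τ_smul, f.map_update_smul]
        simp only [map_mul, smul_eq_mul, Complex.conj_conj] }
    ‖f‖ (fun v => by
      simp only [MultilinearMap.coe_mk, starRingEnd_apply, norm_star]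
      calc ‖f fun i => τ (v i)‖ ≤ ‖f‖ * ∏ i, ‖τ (v i)‖ := f.le_opNorm _
        _ = ‖f‖ * ∏ i, ‖v i‖ := by simp [τ_norm])

lemma conjCMM_apply {k : ℕ} (f : ContinuousMultilinearMap ℂ (fun _ : Fin k => PSp n c) ℂ)
    (v : Fin k → PSp n c) : conjCMM f v = conj (f fun i => τ (v i)) := rfl

lemma conjCMM_norm_le {k : ℕ} (f : ContinuousMultilinearMap ℂ (fun _ : Fin k => PSp n c) ℂ) :
    ‖conjCMM f‖ ≤ ‖f‖ :=
  MultilinearMap.mkContinuous_norm_le _ (norm_nonneg f) _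



lemma radius_mono_aux {E : Type*} [NormedAddCommGroup E] [NormedSpace ℂ E]
    (p q : FormalMultilinearSeries ℂ E ℂ) (h : ∀ k, ‖q k‖ ≤ ‖p k‖) :
    p.radius ≤ q.radius := by
  refine ENNReal.le_of_forall_nnreal_lt fun u hu => ?_
  obtain ⟨C, hC0, hC⟩ := p.norm_mul_pow_le_of_lt_radius hu
  exact q.le_radius_of_bound C fun k =>
    (mul_le_mul_of_nonneg_right (h k) (pow_nonneg u.coe_nonneg k)).trans (hC k)

lemma analyticG {F : PSp n c → ℂ} (hF : AnalyticAt ℂ F 0) :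
    AnalyticAt ℂ (fun p : PSp n c => conj (F (τ p))) 0 := by
  obtain ⟨p, r, hp⟩ : ∃ p r, HasFPowerSeriesOnBall F p 0 r := by
    obtain ⟨p, r, hp⟩ := hF; exact ⟨p, r, hp⟩
  set q : FormalMultilinearSeries ℂ (PSp n c) ℂ := fun k => conjCMM (p k) with hq
  have hqle : ∀ k, ‖q k‖ ≤ ‖p k‖ := fun k => conjCMM_norm_le (p k)
  refine ⟨q, r, ?_, hp.r_pos, ?_⟩
  · exact hp.r_le.trans (radius_mono_aux p q hqle)
  · intro y hy
    have hy' : τ y ∈ Metric.eball (0 : PSp n c) r := by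
      rw [Metric.mem_eball, edist_zero_right] at hy ⊢
      rwa [enorm_eq_nnnorm, τ_nnnorm, ← enorm_eq_nnnorm]
    have hs := (hp.hasSum hy').mapL (Complex.conjCLE : ℂ ≃L[ℝ] ℂ).toContinuousLinearMap
    simp only [ContinuousLinearEquiv.coe_coe, Complex.conjCLE_apply, zero_add] at hs ⊢
    exact hs


lemma key_real_zero {E : Type*} [NormedAddCommGroup E] [NormedSpace ℂ E]
    {R : Type*} [NormedAddCommGroup R] [NormedSpace ℝ R]
    (ρ : R →L[ℝ] E) (hspan : ∀ w : E, ∃ a b : R, w = ρ a + Complex.I • ρ b)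
    {f : E → ℂ} (hf : AnalyticAt ℂ f 0)
    (h0 : ∀ᶠ x in 𝓝 (0 : R), f (ρ x) = 0) : f =ᶠ[𝓝 0] 0 := by
  obtain ⟨p, r, hp⟩ : ∃ p r, HasFPowerSeriesOnBall f p 0 r := by
    obtain ⟨p, r, hp⟩ := hf; exact ⟨p, r, hp⟩
  obtain ⟨ε, εpos, hε⟩ := Metric.eventually_nhds_iff.mp h0
  simp only [dist_zero_right] at hε
  -- Step 1: the coefficients vanish on the real points
  have hreal : ∀ (v : R) (k : ℕ), p k (fun _ => ρ v) = 0 := by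
    intro v k
    set g : ℂ → ℂ := fun t => f (t • ρ v) with hgdef
    have hg : AnalyticAt ℂ g 0 := by
      have h1 : AnalyticAt ℂ (fun t : ℂ => t • ρ v) 0 :=
        (ContinuousLinearMap.toSpanSingleton ℂ (ρ v)).analyticAt 0
      exact hf.comp_of_eq h1 (by simp)
    -- g vanishes at small real points
    have hgreal : ∀ s : ℝ, |s| * (‖v‖ + 1) < ε → g s = 0 := by
      intro s hs
      have h1 : (s : ℂ) • ρ v = ρ (s • v) := by
        rw [Complex.coe_smul, map_smul]
      have h2 : ‖s • v‖ < ε := by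
        rw [norm_smul, Real.norm_eq_abs]
        calc |s| * ‖v‖ ≤ |s| * (‖v‖ + 1) := by
              exact mul_le_mul_of_nonneg_left (by linarith) (abs_nonneg s)
          _ < ε := hs
      simp only [hgdef, h1]
      exact hε h2
    -- hence frequently zero near 0
    have hfreq : ∃ᶠ z in 𝓝[≠] (0 : ℂ), g z = 0 := by
      rw [Filter.frequently_iff]
      intro U hU
      obtain ⟨δ, δpos, hδ⟩ := Metric.mem_nhdsWithin_iff.mp hU
      set s : ℝ := min (δ / 2) (ε / (2 * (‖v‖ + 1)))
      have hvpos : (0:ℝ) < ‖v‖ + 1 := by positivity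
      have hspos : 0 < s := lt_min (by positivity) (by positivity)
      refine ⟨(s : ℂ), hδ ⟨?_, ?_⟩, hgreal s ?_⟩
      · simp only [Metric.mem_ball, dist_zero_right, Complex.norm_real, Real.norm_eq_abs,
          abs_of_pos hspos]
        calc s ≤ δ / 2 := min_le_left _ _
          _ < δ := by linarith
      · simp only [Set.mem_compl_iff, Set.mem_singleton_iff]
        exact_mod_cast ne_of_gt hspos
      · rw [abs_of_pos hspos]
        calc s * (‖v‖ + 1) ≤ ε / (2 * (‖v‖ + 1)) * (‖v‖ + 1) :=
              mul_le_mul_of_nonneg_right (min_le_right _ _) (by positivity)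
          _ < ε := by
              rw [div_mul_eq_mul_div, mul_comm]
              rw [div_lt_iff₀ (by positivity)]
              nlinarith
    have hev : ∀ᶠ z in 𝓝 (0:ℂ), g z = 0 := hg.frequently_zero_iff_eventually_zero.mp hfreq
    -- the explicit one-variable power series of g
    set q : FormalMultilinearSeries ℂ ℂ ℂ :=
      fun m => ContinuousMultilinearMap.mkPiRing ℂ (Fin m) (p m (fun _ => ρ v)) with hqdef
    obtain ⟨r₀, r₀pos, hr₀⟩ := ENNReal.lt_iff_exists_nnreal_btwn.mp hp.r_pos
    obtain ⟨C, Cpos, hC⟩ := p.norm_mul_pow_le_of_lt_radius (hr₀.trans_le hp.r_le)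
    set cv : ℝ≥0 := ‖ρ v‖₊ + 1 with hcv
    have hcvpos : 0 < cv := by positivity
    have hq : HasFPowerSeriesOnBall g q 0 ((r₀ / cv : ℝ≥0) : ℝ≥0∞) := by
      refine ⟨?_, ?_, ?_⟩
      · refine q.le_radius_of_bound C fun m => ?_
        have h1 : ‖q m‖ ≤ ‖p m‖ * ‖ρ v‖ ^ m := by
          rw [hqdef]
          rw [ContinuousMultilinearMap.norm_mkPiRing]
          calc ‖p m (fun _ => ρ v)‖ ≤ ‖p m‖ * ∏ _i : Fin m, ‖ρ v‖ := (p m).le_opNorm _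
            _ = ‖p m‖ * ‖ρ v‖ ^ m := by rw [Finset.prod_const, Finset.card_univ, Fintype.card_fin]
        have h2 : (‖ρ v‖ : ℝ) * ((r₀ / cv : ℝ≥0) : ℝ) ≤ (r₀ : ℝ) := by
          rw [NNReal.coe_div]
          rw [mul_div_assoc']
          rw [div_le_iff₀ (by exact_mod_cast hcvpos)]
          have : (‖ρ v‖ : ℝ) ≤ (cv : ℝ) := by
            rw [hcv]; push_cast; simp [← coe_nnnorm]
          nlinarith [NNReal.coe_nonneg r₀]
        calc ‖q m‖ * ((r₀ / cv : ℝ≥0) : ℝ) ^ m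
            ≤ (‖p m‖ * ‖ρ v‖ ^ m) * ((r₀ / cv : ℝ≥0) : ℝ) ^ m :=
              mul_le_mul_of_nonneg_right h1 (pow_nonneg (NNReal.coe_nonneg _) m)
          _ = ‖p m‖ * (‖ρ v‖ * ((r₀ / cv : ℝ≥0) : ℝ)) ^ m := by ring
          _ ≤ ‖p m‖ * (r₀ : ℝ) ^ m := by
              refine mul_le_mul_of_nonneg_left (pow_le_pow_left₀ ?_ h2 m) (norm_nonneg _)
              positivity
          _ ≤ C := hC m
      · exact ENNReal.coe_pos.mpr (div_pos (by exact_mod_cast r₀pos) hcvpos)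
      · intro y hy
        rw [EMetric.mem_ball, edist_zero_right] at hy
        have hy' : ‖y‖₊ < r₀ / cv := by exact_mod_cast hy
        have hmem : y • ρ v ∈ Metric.eball (0 : E) r := by
          rw [Metric.mem_eball, edist_zero_right]
          have h1 : ‖y • ρ v‖₊ < r₀ := by
            rw [nnnorm_smul]
            calc ‖y‖₊ * ‖ρ v‖₊ ≤ ‖y‖₊ * cv := by
                  exact mul_le_mul_right (by rw [hcv]; exact le_add_of_nonneg_right zero_le_one) _
              _ < (r₀ / cv) * cv := by
                  exact mul_lt_mul_of_pos_right hy' hcvpos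
              _ = r₀ := div_mul_cancel₀ _ (ne_of_gt hcvpos)
          calc (‖y • ρ v‖₊ : ℝ≥0∞) < r₀ := by exact_mod_cast h1
            _ < r := hr₀
        have hs := hp.hasSum hmem
        simp only [zero_add] at hs ⊢
        have hterm : ∀ m : ℕ, q m (fun _ => y) = p m (fun _ => y • ρ v) := by
          intro m
          rw [hqdef, ContinuousMultilinearMap.mkPiRing_apply]
          rw [show (fun _ : Fin m => y • ρ v) = fun i : Fin m => (fun _ : Fin m => y) i • ρ v
            from rfl]
          rw [(p m).map_smul_univ]
        simpa only [hterm] using hs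
    have : q = 0 := HasFPowerSeriesAt.eq_zero_of_eventually ⟨_, hq⟩ hev
    have h1 : q k (fun _ => (1:ℂ)) = 0 := by rw [this]; rfl
    rw [hqdef] at h1
    rw [ContinuousMultilinearMap.mkPiRing_apply] at h1
    simpa using h1
  -- Step 2: the coefficients vanish everywhere
  have hall : ∀ (w : E) (k : ℕ), p k (fun _ => w) = 0 := by
    intro w k
    obtain ⟨a, b, hw⟩ := hspan w
    set h : ℂ → ℂ := fun s => p k (fun _ => ρ a + s • ρ b) with hhdef
    have hh : AnalyticOnNhd ℂ h Set.univ := by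
      intro s _
      have h1 : AnalyticAt ℂ (fun s : ℂ => (fun _ : Fin k => ρ a + s • ρ b)) s := by
        apply AnalyticAt.pi
        intro i
        exact analyticAt_const.add ((ContinuousLinearMap.toSpanSingleton ℂ (ρ b)).analyticAt s)
      exact ((p k).analyticOnNhd _ (Set.mem_univ _)).comp_of_eq h1 rfl
    have hre : ∀ s : ℝ, h s = 0 := by
      intro s
      have h1 : ρ a + (s : ℂ) • ρ b = ρ (a + s • b) := by
        rw [map_add, map_smul, Complex.coe_smul]
      rw [hhdef]
      simp only [h1]
      exact hreal (a + s • b) k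
    have hfreq : ∃ᶠ z in 𝓝[≠] (0 : ℂ), h z = 0 := by
      rw [Filter.frequently_iff]
      intro U hU
      obtain ⟨δ, δpos, hδ⟩ := Metric.mem_nhdsWithin_iff.mp hU
      refine ⟨((δ/2 : ℝ) : ℂ), hδ ⟨?_, ?_⟩, hre (δ/2)⟩
      · simp only [Metric.mem_ball, dist_zero_right, Complex.norm_real, Real.norm_eq_abs,
          abs_of_pos (by linarith : (0:ℝ) < δ/2)]
        linarith
      · simp only [Set.mem_compl_iff, Set.mem_singleton_iff]
        exact_mod_cast (by positivity : (δ/2 : ℝ) ≠ 0)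
    have := hh.eqOn_zero_of_preconnected_of_frequently_eq_zero isPreconnected_univ
      (Set.mem_univ (0:ℂ)) hfreq (Set.mem_univ Complex.I)
    rw [hhdef] at this
    simp only [Pi.zero_apply] at this
    rw [← hw] at this
    exact this
  -- Step 3: conclude
  filter_upwards [EMetric.ball_mem_nhds (0 : E) hp.r_pos] with y hy
  have hs := hp.hasSum hy
  simp only [hall, zero_add] at hs
  exact hs.unique hasSum_zero


/-- The real-linear parametrization of the totally real subspace. -/
noncomputable def ρmap (n c : ℕ) : RSp n c →L[ℝ] PSp n c :=
  LinearMap.toContinuousLinearMap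
    { toFun := fun x =>
        ((fun i => (x.1 i : ℂ) + Complex.I * (x.2.1 i : ℂ)),
         (fun i => (x.1 i : ℂ) - Complex.I * (x.2.1 i : ℂ)),
         (fun j => (x.2.2 j : ℂ)))
      map_add' := by
        intro x y
        refine Prod.ext ?_ (Prod.ext ?_ ?_) <;> funext i <;>
          simp only [Prod.fst_add, Prod.snd_add, Pi.add_apply] <;> push_cast <;> ring
      map_smul' := by
        intro t x
        refine Prod.ext ?_ (Prod.ext ?_ ?_) <;> funext i <;>
          simp only [Prod.smul_fst, Prod.smul_snd, Pi.smul_apply, smul_eq_mul,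
            RingHom.id_apply, Complex.real_smul] <;> push_cast <;> ring }

lemma ρmap_apply (x : RSp n c) :
    ρmap n c x =
      ((fun i => (x.1 i : ℂ) + Complex.I * (x.2.1 i : ℂ)),
       (fun i => (x.1 i : ℂ) - Complex.I * (x.2.1 i : ℂ)),
       (fun j => (x.2.2 j : ℂ))) := by
  simp [ρmap, LinearMap.coe_toContinuousLinearMap']

lemma ρmap_span (w : PSp n c) : ∃ a b : RSp n c, w = ρmap n c a + Complex.I • ρmap n c b := by
  obtain ⟨z, ζ, ν⟩ := w
  refine ⟨((fun i => ((z i).re + (ζ i).re) / 2), (fun i => ((z i).im - (ζ i).im) / 2),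
      fun j => (ν j).re),
    ((fun i => ((z i).im + (ζ i).im) / 2), (fun i => ((ζ i).re - (z i).re) / 2),
      fun j => (ν j).im), ?_⟩
  rw [ρmap_apply, ρmap_apply]
  refine Prod.ext ?_ (Prod.ext ?_ ?_) <;> funext i <;>
    simp only [Prod.fst_add, Prod.snd_add, Pi.add_apply, Prod.smul_fst, Prod.smul_snd,
      Pi.smul_apply, smul_eq_mul, Complex.ext_iff] <;>
    constructor <;> push_cast <;> simp <;> ring

lemma τ_diag (z : Fin n → ℂ) (u : Fin c → ℝ) :
    τ ((z, fun i => conj (z i), fun j => ((u j : ℝ) : ℂ)) : PSp n c)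
      = (z, fun i => conj (z i), fun j => ((u j : ℝ) : ℂ)) := by
  refine Prod.ext ?_ (Prod.ext ?_ ?_) <;> funext i <;>
    simp [τ, Complex.conj_conj, Complex.conj_ofReal]

end Stmt1Aux

open Stmt1Aux in
/-- **Reality characterization.** A function `F` holomorphic near the origin of
`ℂ^n × ℂ^n × ℂ^c` (variables `(z, ζ, ν)`) takes real values at `(z, conj z, u)` for all
`z` near `0` in `ℂ^n` and all real `u` near `0` in `ℝ^c` if and only if
`conj (F (z, ζ, ν)) = F (conj ζ, conj z, conj ν)` near the origin. -/
theorem stmt_1 (n c : ℕ) (hn : 1 ≤ n) (hc : 1 ≤ c)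
    (F : ((Fin n → ℂ) × (Fin n → ℂ) × (Fin c → ℂ)) → ℂ)
    (hF : AnalyticAt ℂ F 0) :
    (∀ᶠ zu in 𝓝 (0 : (Fin n → ℂ) × (Fin c → ℝ)),
        (F (zu.1, fun i => conj (zu.1 i), fun j => (zu.2 j : ℂ))).im = 0) ↔
      (∀ᶠ p in 𝓝 (0 : (Fin n → ℂ) × (Fin n → ℂ) × (Fin c → ℂ)),
        conj (F p) =
          F (fun i => conj (p.2.1 i), fun i => conj (p.1 i), fun j => conj (p.2.2 j))) := by
  constructor
  · intro hre
    have hG := analyticG hF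
    have hH : AnalyticAt ℂ (fun p : PSp n c => F p - conj (F (τ p))) 0 := hF.sub hG
    -- the diagonal restriction map
    set m : RSp n c → (Fin n → ℂ) × (Fin c → ℝ) :=
      fun x => ((fun i => (x.1 i : ℂ) + Complex.I * (x.2.1 i : ℂ)), x.2.2) with hm
    have hmc : Continuous m := by
      refine Continuous.prodMk (continuous_pi fun i => ?_) (continuous_snd.comp continuous_snd)
      exact ((Complex.continuous_ofReal.comp ((continuous_apply i).comp continuous_fst)).add
        (continuous_const.mul
          (Complex.continuous_ofReal.comp
            ((continuous_apply i).comp (continuous_fst.comp continuous_snd)))))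
    have htend : Tendsto m (𝓝 0) (𝓝 (0 : (Fin n → ℂ) × (Fin c → ℝ))) := by
      have h0 : m 0 = 0 := by
        refine Prod.ext ?_ rfl
        funext i; simp [hm]
      exact h0 ▸ hmc.tendsto 0
    have h0 : ∀ᶠ x in 𝓝 (0 : RSp n c), (fun p : PSp n c => F p - conj (F (τ p))) (ρmap n c x) = 0 := by
      filter_upwards [htend.eventually hre] with x hx
      have hρ : ρmap n c x = (((m x).1 : Fin n → ℂ), fun i => conj ((m x).1 i),
          fun j => (((m x).2 j : ℝ) : ℂ)) := by
        rw [ρmap_apply]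
        refine Prod.ext rfl (Prod.ext ?_ rfl)
        funext i
        simp only [hm, map_add, Complex.conj_ofReal, map_mul, Complex.conj_I]
        ring
      have hfix : τ (ρmap n c x) = ρmap n c x := by rw [hρ]; exact τ_diag _ _
      have : conj (F (((m x).1 : Fin n → ℂ), fun i => conj ((m x).1 i),
          fun j => (((m x).2 j : ℝ) : ℂ)))
          = F (((m x).1 : Fin n → ℂ), fun i => conj ((m x).1 i),
            fun j => (((m x).2 j : ℝ) : ℂ)) :=
        Complex.conj_eq_iff_im.mpr hx
      show F (ρmap n c x) - conj (F (τ (ρmap n c x))) = 0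
      rw [hfix, hρ, this, sub_self]
    have heq := key_real_zero (ρmap n c) (ρmap_span) hH h0
    filter_upwards [heq] with q hq
    have h1 : F q = conj (F (τ q)) := sub_eq_zero.mp hq
    calc conj (F q) = conj (conj (F (τ q))) := by rw [← h1]
      _ = F (τ q) := Complex.conj_conj _
  · intro hsym
    set φ : (Fin n → ℂ) × (Fin c → ℝ) → PSp n c :=
      fun zu => (zu.1, fun i => conj (zu.1 i), fun j => ((zu.2 j : ℝ) : ℂ)) with hφ
    have hφc : Continuous φ := by
      refine Continuous.prodMk continuous_fst (Continuous.prodMk (continuous_pi fun i => ?_)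
        (continuous_pi fun j => ?_))
      · exact Complex.continuous_conj.comp ((continuous_apply i).comp continuous_fst)
      · exact Complex.continuous_ofReal.comp ((continuous_apply j).comp continuous_snd)
    have htend : Tendsto φ (𝓝 0) (𝓝 (0 : PSp n c)) := by
      have h0 : φ 0 = 0 := by
        refine Prod.ext rfl (Prod.ext ?_ ?_) <;> funext i <;> simp [hφ]
      exact h0 ▸ hφc.tendsto 0
    filter_upwards [htend.eventually hsym] with zu h
    have hfix := τ_diag (n := n) (c := c) zu.1 zu.2
    simp only [τ] at hfix
    rw [hφ] at h
    simp only at h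
    rw [show (fun i => conj ((fun i => conj (zu.1 i)) i), fun i => conj (zu.1 i),
        fun j => conj ((zu.2 j : ℂ))) = ((zu.1, fun i => conj (zu.1 i),
        fun j => ((zu.2 j : ℝ) : ℂ)) : PSp n c) from hfix] at h
    exact Complex.conj_eq_iff_im.mp h
end

section
/- Let n, c ≥ 1 and let φ : ℂ^n × ℂ^n × ℂ^c → ℂ^c be holomorphic in a neighborhood of the origin with φ(0) = 0, Dφ(0) = 0, satisfying the reality condition conj(φ(z, ζ, ν)) = φ(conj ζ, conj z, conj ν) near the origin. Let Θ be the unique holomorphic germ at 0 with Θ(0) = 0 satisfying (Θ(z, ζ, ω) − ω)/(2i) = φ(z, ζ, (Θ(z, ζ, ω) + ω)/2) identically, and set Θ̄(ζ, z, w) := conj(Θ(conj ζ, conj z, conj w)). Then the two functional equations w = Θ(z, ζ, Θ̄(ζ, z, w)) and ω = Θ̄(ζ, z, Θ(z, ζ, ω)) hold identically for all (z, ζ, w) (respectively (z, ζ, ω)) in a neighborhood of the origin of ℂ^n × ℂ^n × ℂ^c. -/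
open Complex Filter Topology ComplexConjugate

private lemma core_est {n c : ℕ}
    (φ : ((Fin n → ℂ) × (Fin n → ℂ) × (Fin c → ℂ)) → (Fin c → ℂ)) (δ : ℝ)
    (hLip : ∀ x y : ((Fin n → ℂ) × (Fin n → ℂ) × (Fin c → ℂ)),
      ‖x‖ < δ → ‖y‖ < δ → ‖φ x - φ y‖ ≤ (1/2) * ‖x - y‖)
    (z ζ : Fin n → ℂ) (s t u v : Fin c → ℂ)
    (hs : ‖((z, ζ, s) : (Fin n → ℂ) × (Fin n → ℂ) × (Fin c → ℂ))‖ < δ)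
    (ht : ‖((z, ζ, t) : (Fin n → ℂ) × (Fin n → ℂ) × (Fin c → ℂ))‖ < δ)
    (hu : ∀ j, u j = 2 * Complex.I * φ (z, ζ, s) j)
    (hv : ∀ j, v j = 2 * Complex.I * φ (z, ζ, t) j) :
    ‖u - v‖ ≤ ‖s - t‖ := by
  have h1 : u - v = (2 * Complex.I) • (φ (z, ζ, s) - φ (z, ζ, t)) := by
    funext j
    simp only [Pi.sub_apply, Pi.smul_apply, smul_eq_mul, hu j, hv j]
    ring
  have h2 : ((z, ζ, s) : (Fin n → ℂ) × (Fin n → ℂ) × (Fin c → ℂ)) - (z, ζ, t)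
      = ((0 : Fin n → ℂ), (0 : Fin n → ℂ), s - t) := by
    simp [Prod.ext_iff]
  have h3 : ‖((z, ζ, s) : (Fin n → ℂ) × (Fin n → ℂ) × (Fin c → ℂ)) - (z, ζ, t)‖ = ‖s - t‖ := by
    rw [h2]
    simp [Prod.norm_def, norm_nonneg, max_eq_right]
  have h4 : ‖(2 * Complex.I : ℂ)‖ = 2 := by simp
  calc ‖u - v‖ = 2 * ‖φ (z, ζ, s) - φ (z, ζ, t)‖ := by rw [h1, norm_smul, h4]
    _ ≤ 2 * ((1/2) * ‖((z, ζ, s) : (Fin n → ℂ) × (Fin n → ℂ) × (Fin c → ℂ)) - (z, ζ, t)‖) := by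
        have := hLip _ _ hs ht
        linarith [this]
    _ = ‖s - t‖ := by rw [h3]; ring

/-- **The two fundamental functional equations.** With `φ` holomorphic near `0`
satisfying `φ(0) = 0`, `Dφ(0) = 0` and the reality condition, `Θ` the holomorphic germ
with `Θ(0) = 0` solving the complexified defining equation, and
`Θ̄(ζ, z, w) := conj (Θ (conj ζ, conj z, conj w))`, one has identically near the origin:
`w = Θ(z, ζ, Θ̄(ζ, z, w))` and `ω = Θ̄(ζ, z, Θ(z, ζ, ω))`. -/
theorem stmt_6 (n c : ℕ) (hn : 1 ≤ n) (hc : 1 ≤ c)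
    (φ : ((Fin n → ℂ) × (Fin n → ℂ) × (Fin c → ℂ)) → (Fin c → ℂ))
    (hφ : AnalyticAt ℂ φ 0) (hφ0 : φ 0 = 0) (hDφ : fderiv ℂ φ 0 = 0)
    (hreal : ∀ᶠ p in 𝓝 (0 : (Fin n → ℂ) × (Fin n → ℂ) × (Fin c → ℂ)),
      (fun j => conj (φ p j)) =
        φ (fun i => conj (p.2.1 i), fun i => conj (p.1 i), fun j => conj (p.2.2 j)))
    (Θ : ((Fin n → ℂ) × (Fin n → ℂ) × (Fin c → ℂ)) → (Fin c → ℂ))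
    (hΘ : AnalyticAt ℂ Θ 0) (hΘ0 : Θ 0 = 0)
    (hΘeq : ∀ᶠ p in 𝓝 (0 : (Fin n → ℂ) × (Fin n → ℂ) × (Fin c → ℂ)),
      (fun j => (Θ p j - p.2.2 j) / (2 * Complex.I)) =
        φ (p.1, p.2.1, fun j => (Θ p j + p.2.2 j) / 2))
    (Θb : ((Fin n → ℂ) × (Fin n → ℂ) × (Fin c → ℂ)) → (Fin c → ℂ))
    (hΘb : Θb = fun q => fun j =>
      conj (Θ (fun i => conj (q.1 i), fun i => conj (q.2.1 i), fun k => conj (q.2.2 k)) j)) :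
    (∀ᶠ p in 𝓝 (0 : (Fin n → ℂ) × (Fin n → ℂ) × (Fin c → ℂ)),
      p.2.2 = Θ (p.1, p.2.1, Θb (p.2.1, p.1, p.2.2))) ∧
    (∀ᶠ p in 𝓝 (0 : (Fin n → ℂ) × (Fin n → ℂ) × (Fin c → ℂ)),
      p.2.2 = Θb (p.2.1, p.1, Θ (p.1, p.2.1, p.2.2))) := by
  -- the conjugation map
  set σ : ((Fin n → ℂ) × (Fin n → ℂ) × (Fin c → ℂ)) → ((Fin n → ℂ) × (Fin n → ℂ) × (Fin c → ℂ)) := fun q =>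
    (fun i => conj (q.1 i), fun i => conj (q.2.1 i), fun k => conj (q.2.2 k)) with hσ
  have hσc : Continuous σ := by
    rw [hσ]
    refine Continuous.prodMk ?_ (Continuous.prodMk ?_ ?_) <;>
      exact continuous_pi fun i => Complex.continuous_conj.comp ((continuous_apply i).comp
        (by fun_prop))
  have hσ0 : σ 0 = 0 := by
    rw [hσ]
    refine Prod.ext ?_ (Prod.ext ?_ ?_) <;> · funext i; simp
  have hΘb' : ∀ q : (Fin n → ℂ) × (Fin n → ℂ) × (Fin c → ℂ),
      Θb q = fun j => conj (Θ (σ q) j) := fun q => by rw [hΘb, hσ]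
  have hΘb0 : Θb 0 = 0 := by
    rw [hΘb' 0, hσ0]
    funext j
    simp [hΘ0]
  have h2I : (2 * Complex.I : ℂ) ≠ 0 := by simp [Complex.I_ne_zero]
  -- composition helper
  have hcomp : ∀ {f : ((Fin n → ℂ) × (Fin n → ℂ) × (Fin c → ℂ)) → ((Fin n → ℂ) × (Fin n → ℂ) × (Fin c → ℂ))},
      Tendsto f (𝓝 (0 : (Fin n → ℂ) × (Fin n → ℂ) × (Fin c → ℂ)))
        (𝓝 (0 : (Fin n → ℂ) × (Fin n → ℂ) × (Fin c → ℂ))) →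
      ∀ {A : ((Fin n → ℂ) × (Fin n → ℂ) × (Fin c → ℂ)) → Prop},
      (∀ᶠ x in 𝓝 (0 : (Fin n → ℂ) × (Fin n → ℂ) × (Fin c → ℂ)), A x) →
      ∀ᶠ p in 𝓝 (0 : (Fin n → ℂ) × (Fin n → ℂ) × (Fin c → ℂ)), A (f p) := by
    intro f hf A hA
    exact hf.eventually hA
  -- basic tendsto facts
  have tΘ : Tendsto Θ (𝓝 (0 : (Fin n → ℂ) × (Fin n → ℂ) × (Fin c → ℂ))) (𝓝 0) := by
    have h := hΘ.continuousAt
    rwa [ContinuousAt, hΘ0] at h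
  have tσ : Tendsto σ (𝓝 (0 : (Fin n → ℂ) × (Fin n → ℂ) × (Fin c → ℂ))) (𝓝 0) := by
    have h := hσc.continuousAt (x := 0)
    rwa [ContinuousAt, hσ0] at h
  have tΘb : Tendsto Θb (𝓝 (0 : (Fin n → ℂ) × (Fin n → ℂ) × (Fin c → ℂ))) (𝓝 0) := by
    have h : ContinuousAt Θb 0 := by
      have h2 : ContinuousAt (fun q : (Fin n → ℂ) × (Fin n → ℂ) × (Fin c → ℂ) =>
          (fun j => conj (Θ (σ q) j) : Fin c → ℂ)) 0 := by
        refine continuousAt_pi.2 fun j => Complex.continuous_conj.continuousAt.comp ?_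
        refine (continuous_apply j).continuousAt.comp ?_
        have : ContinuousAt Θ (σ 0) := by rw [hσ0]; exact hΘ.continuousAt
        exact this.comp hσc.continuousAt
      exact h2.congr (by filter_upwards with q using (hΘb' q).symm)
    rwa [ContinuousAt, hΘb0] at h
  have tp1 : Tendsto (fun p : (Fin n → ℂ) × (Fin n → ℂ) × (Fin c → ℂ) => p.1)
      (𝓝 0) (𝓝 (0 : Fin n → ℂ)) := by
    simpa using continuous_fst.tendsto (0 : (Fin n → ℂ) × (Fin n → ℂ) × (Fin c → ℂ))
  have tp21 : Tendsto (fun p : (Fin n → ℂ) × (Fin n → ℂ) × (Fin c → ℂ) => p.2.1)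
      (𝓝 0) (𝓝 (0 : Fin n → ℂ)) := by
    simpa using continuous_snd.fst.tendsto (0 : (Fin n → ℂ) × (Fin n → ℂ) × (Fin c → ℂ))
  have tp22 : Tendsto (fun p : (Fin n → ℂ) × (Fin n → ℂ) × (Fin c → ℂ) => p.2.2)
      (𝓝 0) (𝓝 (0 : Fin c → ℂ)) := by
    simpa using continuous_snd.snd.tendsto (0 : (Fin n → ℂ) × (Fin n → ℂ) × (Fin c → ℂ))
  have tavg : ∀ (A B : ((Fin n → ℂ) × (Fin n → ℂ) × (Fin c → ℂ)) → (Fin c → ℂ)),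
      Tendsto A (𝓝 0) (𝓝 0) → Tendsto B (𝓝 0) (𝓝 0) →
      Tendsto (fun p => (fun j => (A p j + B p j) / 2 : Fin c → ℂ)) (𝓝 0) (𝓝 0) := by
    intro A B hA hB
    rw [tendsto_pi_nhds]
    intro j
    have hAj : Tendsto (fun p => A p j) (𝓝 0) (𝓝 (0 : ℂ)) := by
      simpa [Function.comp_def] using ((continuous_apply j).tendsto (0 : Fin c → ℂ)).comp hA
    have hBj : Tendsto (fun p => B p j) (𝓝 0) (𝓝 (0 : ℂ)) := by
      simpa [Function.comp_def] using ((continuous_apply j).tendsto (0 : Fin c → ℂ)).comp hB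
    have := (hAj.add hBj).div_const 2
    simpa using this
  have tmk3 : ∀ (C : ((Fin n → ℂ) × (Fin n → ℂ) × (Fin c → ℂ)) → (Fin c → ℂ)),
      Tendsto C (𝓝 0) (𝓝 0) →
      Tendsto (fun p : (Fin n → ℂ) × (Fin n → ℂ) × (Fin c → ℂ) =>
        ((p.1, p.2.1, C p) : (Fin n → ℂ) × (Fin n → ℂ) × (Fin c → ℂ))) (𝓝 0) (𝓝 0) := by
    intro C hC
    exact tp1.prodMk_nhds (tp21.prodMk_nhds hC)
  -- Lipschitz bound with constant 1/2 near 0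
  have hstrict : HasStrictFDerivAt φ
      (0 : ((Fin n → ℂ) × (Fin n → ℂ) × (Fin c → ℂ)) →L[ℂ] (Fin c → ℂ)) 0 := by
    have h := AnalyticAt.hasStrictFDerivAt (𝕜 := ℂ) hφ
    rwa [hDφ] at h
  have hlo : (fun p : (((Fin n → ℂ) × (Fin n → ℂ) × (Fin c → ℂ)) ×
      ((Fin n → ℂ) × (Fin n → ℂ) × (Fin c → ℂ))) => φ p.1 - φ p.2)
      =o[𝓝 (0, 0)] fun p => p.1 - p.2 := by
    simpa [hasStrictFDerivAt_iff_isLittleO] using hstrict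
  obtain ⟨δ, hδpos, hball⟩ := Metric.eventually_nhds_iff.mp
    (hlo.def (by norm_num : (0:ℝ) < 1/2))
  have hLip : ∀ x y : (Fin n → ℂ) × (Fin n → ℂ) × (Fin c → ℂ),
      ‖x‖ < δ → ‖y‖ < δ → ‖φ x - φ y‖ ≤ (1/2) * ‖x - y‖ := by
    intro x y hx hy
    have hd : dist ((x, y) : ((Fin n → ℂ) × (Fin n → ℂ) × (Fin c → ℂ)) ×
        ((Fin n → ℂ) × (Fin n → ℂ) × (Fin c → ℂ))) (0, 0) < δ := by
      simp only [Prod.dist_eq, dist_zero_right]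
      exact max_lt hx hy
    simpa using hball hd
  have hδball : ∀ᶠ x in 𝓝 (0 : (Fin n → ℂ) × (Fin n → ℂ) × (Fin c → ℂ)), ‖x‖ < δ := by
    filter_upwards [Metric.ball_mem_nhds (0 : (Fin n → ℂ) × (Fin n → ℂ) × (Fin c → ℂ)) hδpos]
      with x hx
    simpa [dist_zero_right] using Metric.mem_ball.mp hx
  -- pointwise form of the Θ equation
  have hEa : ∀ᶠ p in 𝓝 (0 : (Fin n → ℂ) × (Fin n → ℂ) × (Fin c → ℂ)), ∀ j, Θ p j - p.2.2 j =
      2 * Complex.I * φ (p.1, p.2.1, fun j => (Θ p j + p.2.2 j) / 2) j := by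
    filter_upwards [hΘeq] with p hp j
    have h := congrFun hp j
    rw [div_eq_iff h2I] at h
    rw [h]; ring
  -- the conjugated equation for Θb
  have tr : Tendsto (fun q : (Fin n → ℂ) × (Fin n → ℂ) × (Fin c → ℂ) =>
      (((σ q).1, (σ q).2.1, fun j => (Θ (σ q) j + (σ q).2.2 j) / 2) :
        (Fin n → ℂ) × (Fin n → ℂ) × (Fin c → ℂ))) (𝓝 0) (𝓝 0) := by
    refine Tendsto.prodMk_nhds (tp1.comp tσ) (Tendsto.prodMk_nhds (tp21.comp tσ) ?_)
    exact tavg _ _ (tΘ.comp tσ) (tp22.comp tσ)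
  have hEb : ∀ᶠ q in 𝓝 (0 : (Fin n → ℂ) × (Fin n → ℂ) × (Fin c → ℂ)), ∀ j, q.2.2 j - Θb q j =
      2 * Complex.I * φ (q.2.1, q.1, fun j => (Θb q j + q.2.2 j) / 2) j := by
    filter_upwards [hcomp tσ hEa, hcomp tr hreal] with q h1 h2 j
    have hflip : ∀ k, conj (Θ (σ q) k) = Θb q k := fun k => (congrFun (hΘb' q) k).symm
    have hc := congrFun h2 j
    simp only [Complex.conj_conj, map_div₀, map_add, map_ofNat, hflip] at hc
    have hj := congrArg (starRingEnd ℂ) (h1 j)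
    simp only [map_sub, map_mul, map_ofNat, Complex.conj_conj, Complex.conj_I, hflip] at hj
    rw [hc] at hj
    simp only [hσ, Complex.conj_conj] at hj
    linear_combination -hj
  -- more tendsto facts
  have tτ : Tendsto (fun p : (Fin n → ℂ) × (Fin n → ℂ) × (Fin c → ℂ) =>
      ((p.2.1, p.1, p.2.2) : (Fin n → ℂ) × (Fin n → ℂ) × (Fin c → ℂ))) (𝓝 0) (𝓝 0) :=
    tp21.prodMk_nhds (tp1.prodMk_nhds tp22)
  have tΩ : Tendsto (fun p : (Fin n → ℂ) × (Fin n → ℂ) × (Fin c → ℂ) =>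
      Θb (p.2.1, p.1, p.2.2)) (𝓝 0) (𝓝 0) := tΘb.comp tτ
  have tg2 : Tendsto (fun p : (Fin n → ℂ) × (Fin n → ℂ) × (Fin c → ℂ) =>
      ((p.1, p.2.1, Θb (p.2.1, p.1, p.2.2)) : (Fin n → ℂ) × (Fin n → ℂ) × (Fin c → ℂ)))
      (𝓝 0) (𝓝 0) := tmk3 _ tΩ
  have tW : Tendsto (fun p : (Fin n → ℂ) × (Fin n → ℂ) × (Fin c → ℂ) =>
      Θ (p.1, p.2.1, Θb (p.2.1, p.1, p.2.2))) (𝓝 0) (𝓝 0) := tΘ.comp tg2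
  have tΘ' : Tendsto (fun p : (Fin n → ℂ) × (Fin n → ℂ) × (Fin c → ℂ) =>
      Θ (p.1, p.2.1, p.2.2)) (𝓝 0) (𝓝 0) := tΘ
  have tq2 : Tendsto (fun p : (Fin n → ℂ) × (Fin n → ℂ) × (Fin c → ℂ) =>
      ((p.2.1, p.1, Θ (p.1, p.2.1, p.2.2)) : (Fin n → ℂ) × (Fin n → ℂ) × (Fin c → ℂ)))
      (𝓝 0) (𝓝 0) := tp21.prodMk_nhds (tp1.prodMk_nhds tΘ')
  have tΩ' : Tendsto (fun p : (Fin n → ℂ) × (Fin n → ℂ) × (Fin c → ℂ) =>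
      Θb (p.2.1, p.1, Θ (p.1, p.2.1, p.2.2))) (𝓝 0) (𝓝 0) := tΘb.comp tq2
  -- the two conclusions
  constructor
  · -- p.2.2 = Θ (p.1, p.2.1, Θb (p.2.1, p.1, p.2.2))
    have tm1 := tmk3 _ (tavg _ _ tΩ tp22)
    have tm2 := tmk3 _ (tavg _ _ tW tΩ)
    filter_upwards [hcomp tτ hEb, hcomp tg2 hEa,
      hcomp tm1 hδball, hcomp tm2 hδball] with p h1 h2 hn1 hn2
    have key := core_est φ δ hLip p.1 p.2.1
      (fun j => (Θb (p.2.1, p.1, p.2.2) j + p.2.2 j) / 2)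
      (fun j => (Θ (p.1, p.2.1, Θb (p.2.1, p.1, p.2.2)) j + Θb (p.2.1, p.1, p.2.2) j) / 2)
      (fun j => p.2.2 j - Θb (p.2.1, p.1, p.2.2) j)
      (fun j => Θ (p.1, p.2.1, Θb (p.2.1, p.1, p.2.2)) j - Θb (p.2.1, p.1, p.2.2) j)
      hn1 hn2 (fun j => h1 j) (fun j => h2 j)
    have e1 : (fun j => p.2.2 j - Θb (p.2.1, p.1, p.2.2) j) -
        (fun j => Θ (p.1, p.2.1, Θb (p.2.1, p.1, p.2.2)) j - Θb (p.2.1, p.1, p.2.2) j)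
        = p.2.2 - Θ (p.1, p.2.1, Θb (p.2.1, p.1, p.2.2)) := by
      funext j; simp only [Pi.sub_apply]; ring
    have e2 : (fun j => (Θb (p.2.1, p.1, p.2.2) j + p.2.2 j) / 2) -
        (fun j => (Θ (p.1, p.2.1, Θb (p.2.1, p.1, p.2.2)) j + Θb (p.2.1, p.1, p.2.2) j) / 2)
        = ((2:ℂ)⁻¹) • (p.2.2 - Θ (p.1, p.2.1, Θb (p.2.1, p.1, p.2.2))) := by
      funext j; simp only [Pi.sub_apply, Pi.smul_apply, smul_eq_mul]; ring
    rw [e1, e2, norm_smul] at key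
    have hnn : (0:ℝ) ≤ ‖p.2.2 - Θ (p.1, p.2.1, Θb (p.2.1, p.1, p.2.2))‖ := norm_nonneg _
    have hhalf : ‖((2:ℂ)⁻¹)‖ = 1/2 := by
      rw [norm_inv]; norm_num
    rw [hhalf] at key
    have : ‖p.2.2 - Θ (p.1, p.2.1, Θb (p.2.1, p.1, p.2.2))‖ ≤ 0 := by linarith
    have h0 := norm_le_zero_iff.mp this
    exact sub_eq_zero.mp h0
  · -- p.2.2 = Θb (p.2.1, p.1, Θ (p.1, p.2.1, p.2.2))
    have tm3 := tmk3 _ (tavg _ _ tΘ' tp22)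
    have tm4 := tmk3 _ (tavg _ _ tΩ' tΘ')
    filter_upwards [hEa, hcomp tq2 hEb,
      hcomp tm3 hδball, hcomp tm4 hδball] with p h1 h2 hn1 hn2
    have key := core_est φ δ hLip p.1 p.2.1
      (fun j => (Θ (p.1, p.2.1, p.2.2) j + p.2.2 j) / 2)
      (fun j => (Θb (p.2.1, p.1, Θ (p.1, p.2.1, p.2.2)) j + Θ (p.1, p.2.1, p.2.2) j) / 2)
      (fun j => Θ (p.1, p.2.1, p.2.2) j - p.2.2 j)
      (fun j => Θ (p.1, p.2.1, p.2.2) j - Θb (p.2.1, p.1, Θ (p.1, p.2.1, p.2.2)) j)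
      hn1 hn2 (fun j => h1 j) (fun j => h2 j)
    have e1 : (fun j => Θ (p.1, p.2.1, p.2.2) j - p.2.2 j) -
        (fun j => Θ (p.1, p.2.1, p.2.2) j - Θb (p.2.1, p.1, Θ (p.1, p.2.1, p.2.2)) j)
        = Θb (p.2.1, p.1, Θ (p.1, p.2.1, p.2.2)) - p.2.2 := by
      funext j; simp only [Pi.sub_apply]; ring
    have e2 : (fun j => (Θ (p.1, p.2.1, p.2.2) j + p.2.2 j) / 2) -
        (fun j => (Θb (p.2.1, p.1, Θ (p.1, p.2.1, p.2.2)) j + Θ (p.1, p.2.1, p.2.2) j) / 2)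
        = (-(2:ℂ)⁻¹) • (Θb (p.2.1, p.1, Θ (p.1, p.2.1, p.2.2)) - p.2.2) := by
      funext j; simp only [Pi.sub_apply, Pi.smul_apply, smul_eq_mul]; ring
    rw [e1, e2, norm_smul] at key
    have hhalf : ‖(-(2:ℂ)⁻¹)‖ = 1/2 := by
      rw [norm_neg, norm_inv]; norm_num
    rw [hhalf] at key
    have hnn : (0:ℝ) ≤ ‖Θb (p.2.1, p.1, Θ (p.1, p.2.1, p.2.2)) - p.2.2‖ := norm_nonneg _
    have : ‖Θb (p.2.1, p.1, Θ (p.1, p.2.1, p.2.2)) - p.2.2‖ ≤ 0 := by linarith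
    have h0 := norm_le_zero_iff.mp this
    exact (sub_eq_zero.mp h0).symm
end

section
/- Let n, c ≥ 1 and let φ : ℂ^n × ℂ^n × ℂ^c → ℂ^c be holomorphic in a neighborhood of the origin with φ(0) = 0, Dφ(0) = 0, satisfying the reality condition conj(φ(z, ζ, ν)) = φ(conj ζ, conj z, conj ν), and let M = {(z, w) : Im w = φ(z, conj z, Re w)} near the origin of ℂ^n × ℂ^c. Then the map Ψ(z', w') := (z', w' + i·φ(0, 0, w')) is a biholomorphism between neighborhoods of the origin of ℂ^n × ℂ^c with Ψ(0) = 0 whose differential at 0 is the identity, and the preimage Ψ^{-1}(M) coincides, near the origin, with a graph {(z', w') : Im w' = φ'(z', conj z', Re w')} for some holomorphic φ' near 0 with φ'(0) = 0, Dφ'(0) = 0, the reality condition, and φ'(0, 0, ν) ≡ 0 for all ν near 0 in ℂ^c. -/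
open Complex Filter Topology ComplexConjugate



noncomputable section CRAux

/-- Domain of `φ`. -/
abbrev CRX (n c : ℕ) := (Fin n → ℂ) × (Fin n → ℂ) × (Fin c → ℂ)
/-- Codomain of `φ`. -/
abbrev CRY (c : ℕ) := Fin c → ℂ

/-- Componentwise conjugation. -/
def crCv {m : ℕ} (v : Fin m → ℂ) : Fin m → ℂ := fun j => conj (v j)

@[simp] lemma crCv_zero {m : ℕ} : crCv (0 : Fin m → ℂ) = 0 := by funext j; simp [crCv]

@[simp] lemma crCv_crCv {m : ℕ} (v : Fin m → ℂ) : crCv (crCv v) = v := by funext j; simp [crCv]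

/-- The antiholomorphic involution appearing in the reality condition. -/
def crSigma {n c : ℕ} (x : CRX n c) : CRX n c := (crCv x.2.1, crCv x.1, crCv x.2.2)

@[simp] lemma crSigma_zero {n c : ℕ} : crSigma (0 : CRX n c) = 0 := by
  simp [crSigma, Prod.ext_iff]

@[simp] lemma crSigma_crSigma {n c : ℕ} (x : CRX n c) : crSigma (crSigma x) = x := by
  simp [crSigma]

def crA {n c : ℕ} (φ : CRX n c → CRY c) (p : CRX n c × CRY c) : CRY c :=
  φ (0, 0, p.1.2.2 + Complex.I • p.2)

def crB {n c : ℕ} (φ : CRX n c → CRY c) (p : CRX n c × CRY c) : CRY c :=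
  φ (0, 0, p.1.2.2 - Complex.I • p.2)

def crN {n c : ℕ} (φ : CRX n c → CRY c) (p : CRX n c × CRY c) : CRX n c :=
  (p.1.1, p.1.2.1, p.1.2.2 - (2 * Complex.I)⁻¹ • (crA φ p - crB φ p))

/-- The complexified implicit equation for the new graphing function. -/
def crH {n c : ℕ} (φ : CRX n c → CRY c) (p : CRX n c × CRY c) : CRY c :=
  φ (crN φ p) - (2 : ℂ)⁻¹ • (crA φ p + crB φ p) - p.2

def crG {n c : ℕ} (φ : CRX n c → CRY c) (p : CRX n c × CRY c) : CRX n c × CRY c :=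
  (p.1, crH φ p)

lemma conj2inv : conj ((2:ℂ)⁻¹) = 2⁻¹ := by simp [Complex.ext_iff]

lemma conj2Iinv : conj (((2:ℂ) * Complex.I)⁻¹) = -((2:ℂ) * Complex.I)⁻¹ := by
  simp [map_inv₀, Complex.ext_iff]

variable {n c : ℕ} {φ : CRX n c → CRY c}

lemma crA_zero (hφ0 : φ 0 = 0) : crA φ 0 = 0 := by
  have h : ((0 : Fin n → ℂ), (0 : Fin n → ℂ),
      (0 : CRY c) + Complex.I • (0 : CRY c)) = (0 : CRX n c) := by simp [Prod.ext_iff]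
  simp only [crA]
  rw [show ((0 : CRX n c × CRY c).1.2.2 + Complex.I • (0 : CRX n c × CRY c).2)
    = ((0:CRY c) + Complex.I • (0: CRY c)) from rfl, h, hφ0]

lemma crB_zero (hφ0 : φ 0 = 0) : crB φ 0 = 0 := by
  have h : ((0 : Fin n → ℂ), (0 : Fin n → ℂ),
      (0 : CRY c) - Complex.I • (0 : CRY c)) = (0 : CRX n c) := by simp [Prod.ext_iff]
  simp only [crB]
  rw [show ((0 : CRX n c × CRY c).1.2.2 - Complex.I • (0 : CRX n c × CRY c).2)
    = ((0:CRY c) - Complex.I • (0: CRY c)) from rfl, h, hφ0]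

lemma crN_zero (hφ0 : φ 0 = 0) : crN φ 0 = 0 := by
  simp [crN, crA_zero hφ0, crB_zero hφ0, Prod.ext_iff]

lemma crH_zero (hφ0 : φ 0 = 0) : crH φ 0 = 0 := by
  simp [crH, crN_zero hφ0, crA_zero hφ0, crB_zero hφ0, hφ0]

lemma crG_zero (hφ0 : φ 0 = 0) : crG φ 0 = 0 := by
  simp [crG, crH_zero hφ0, Prod.ext_iff]

def crPnu (n c : ℕ) : (CRX n c × CRY c) →L[ℂ] CRY c :=
  (ContinuousLinearMap.snd ℂ (Fin n → ℂ) (Fin c → ℂ)).comp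
    ((ContinuousLinearMap.snd ℂ (Fin n → ℂ) ((Fin n → ℂ) × (Fin c → ℂ))).comp
      (ContinuousLinearMap.fst ℂ (CRX n c) (CRY c)))

def crPmu (n c : ℕ) : (CRX n c × CRY c) →L[ℂ] CRY c := ContinuousLinearMap.snd ℂ (CRX n c) (CRY c)

def crLA (n c : ℕ) : (CRX n c × CRY c) →L[ℂ] CRX n c :=
  (0 : (CRX n c × CRY c) →L[ℂ] (Fin n → ℂ)).prod
    ((0 : (CRX n c × CRY c) →L[ℂ] (Fin n → ℂ)).prod (crPnu n c + Complex.I • crPmu n c))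

def crLB (n c : ℕ) : (CRX n c × CRY c) →L[ℂ] CRX n c :=
  (0 : (CRX n c × CRY c) →L[ℂ] (Fin n → ℂ)).prod
    ((0 : (CRX n c × CRY c) →L[ℂ] (Fin n → ℂ)).prod (crPnu n c - Complex.I • crPmu n c))

def crC1 (n c : ℕ) : (CRX n c × CRY c) →L[ℂ] (Fin n → ℂ) :=
  (ContinuousLinearMap.fst ℂ (Fin n → ℂ) ((Fin n → ℂ) × (Fin c → ℂ))).comp
    (ContinuousLinearMap.fst ℂ (CRX n c) (CRY c))

def crC2 (n c : ℕ) : (CRX n c × CRY c) →L[ℂ] (Fin n → ℂ) :=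
  (ContinuousLinearMap.fst ℂ (Fin n → ℂ) (Fin c → ℂ)).comp
    ((ContinuousLinearMap.snd ℂ (Fin n → ℂ) ((Fin n → ℂ) × (Fin c → ℂ))).comp
      (ContinuousLinearMap.fst ℂ (CRX n c) (CRY c)))

lemma crA_comp : crA φ = φ ∘ ⇑(crLA n c) := rfl
lemma crB_comp : crB φ = φ ∘ ⇑(crLB n c) := rfl

lemma crA_an (hφ : AnalyticAt ℂ φ 0) : AnalyticAt ℂ (crA φ) 0 := by
  rw [crA_comp]
  refine AnalyticAt.comp ?_ ((crLA n c).analyticAt 0)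
  rw [map_zero]; exact hφ

lemma crB_an (hφ : AnalyticAt ℂ φ 0) : AnalyticAt ℂ (crB φ) 0 := by
  rw [crB_comp]
  refine AnalyticAt.comp ?_ ((crLB n c).analyticAt 0)
  rw [map_zero]; exact hφ

lemma crN_an (hφ : AnalyticAt ℂ φ 0) : AnalyticAt ℂ (crN φ) 0 := by
  refine AnalyticAt.prod ((crC1 n c).analyticAt 0) (AnalyticAt.prod ((crC2 n c).analyticAt 0) ?_)
  exact ((crPnu n c).analyticAt 0).sub
    ((analyticAt_const (v := ((2 * Complex.I)⁻¹ : ℂ))).smul ((crA_an hφ).sub (crB_an hφ)))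

lemma crH_an (hφ : AnalyticAt ℂ φ 0) (hφ0 : φ 0 = 0) : AnalyticAt ℂ (crH φ) 0 := by
  have h1 : AnalyticAt ℂ (fun p => φ (crN φ p)) 0 := by
    refine AnalyticAt.comp ?_ (crN_an hφ)
    rw [crN_zero hφ0]; exact hφ
  exact (h1.sub ((analyticAt_const (v := ((2:ℂ)⁻¹))).smul ((crA_an hφ).add (crB_an hφ)))).sub
    ((crPmu n c).analyticAt 0)

lemma crG_an (hφ : AnalyticAt ℂ φ 0) (hφ0 : φ 0 = 0) : AnalyticAt ℂ (crG φ) 0 :=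
  AnalyticAt.prod (analyticAt_fst) (crH_an hφ hφ0)

lemma crA_deriv (hd : HasFDerivAt φ (0 : CRX n c →L[ℂ] CRY c) 0) :
    HasFDerivAt (crA φ) (0 : (CRX n c × CRY c) →L[ℂ] CRY c) 0 := by
  have hd' : HasFDerivAt φ (0 : CRX n c →L[ℂ] CRY c) ((crLA n c) 0) := by
    rw [map_zero]; exact hd
  have h := hd'.comp (0 : CRX n c × CRY c) (crLA n c).hasFDerivAt
  rw [ContinuousLinearMap.zero_comp] at h
  exact h

lemma crB_deriv (hd : HasFDerivAt φ (0 : CRX n c →L[ℂ] CRY c) 0) :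
    HasFDerivAt (crB φ) (0 : (CRX n c × CRY c) →L[ℂ] CRY c) 0 := by
  have hd' : HasFDerivAt φ (0 : CRX n c →L[ℂ] CRY c) ((crLB n c) 0) := by
    rw [map_zero]; exact hd
  have h := hd'.comp (0 : CRX n c × CRY c) (crLB n c).hasFDerivAt
  rw [ContinuousLinearMap.zero_comp] at h
  exact h

lemma crN_deriv (hd : HasFDerivAt φ (0 : CRX n c →L[ℂ] CRY c) 0) :
    HasFDerivAt (crN φ) ((crC1 n c).prod ((crC2 n c).prod (crPnu n c))) 0 := by
  refine HasFDerivAt.prodMk ((crC1 n c).hasFDerivAt) (HasFDerivAt.prodMk ((crC2 n c).hasFDerivAt) ?_)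
  have hab := (crA_deriv hd).sub (crB_deriv hd)
  rw [sub_zero] at hab
  have hs := hab.const_smul ((2 * Complex.I)⁻¹ : ℂ)
  rw [smul_zero] at hs
  have h := ((crPnu n c).hasFDerivAt (x := (0 : CRX n c × CRY c))).sub hs
  rw [sub_zero] at h
  exact h

lemma crH_deriv (hd : HasFDerivAt φ (0 : CRX n c →L[ℂ] CRY c) 0) (hφ0 : φ 0 = 0) :
    HasFDerivAt (crH φ) (-(crPmu n c)) 0 := by
  have hd' : HasFDerivAt φ (0 : CRX n c →L[ℂ] CRY c) (crN φ 0) := by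
    rw [crN_zero hφ0]; exact hd
  have h1 := hd'.comp (0 : CRX n c × CRY c) (crN_deriv hd)
  rw [ContinuousLinearMap.zero_comp] at h1
  have hab := (crA_deriv hd).add (crB_deriv hd)
  rw [add_zero] at hab
  have hs := hab.const_smul ((2:ℂ)⁻¹)
  rw [smul_zero] at hs
  have h2 := h1.sub hs
  rw [sub_zero] at h2
  have h3 := h2.sub ((crPmu n c).hasFDerivAt (x := (0 : CRX n c × CRY c)))
  rw [zero_sub] at h3
  exact h3

lemma crG_deriv (hd : HasFDerivAt φ (0 : CRX n c →L[ℂ] CRY c) 0) (hφ0 : φ 0 = 0) :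
    HasFDerivAt (crG φ)
      ((ContinuousLinearMap.fst ℂ (CRX n c) (CRY c)).prod (-(crPmu n c))) 0 :=
  HasFDerivAt.prodMk (hasFDerivAt_fst) (crH_deriv hd hφ0)

/-- The differential of `crG` at the origin, as a continuous linear equivalence. -/
def crEE (n c : ℕ) : (CRX n c × CRY c) ≃L[ℂ] (CRX n c × CRY c) :=
  (ContinuousLinearEquiv.refl ℂ (CRX n c)).prodCongr (ContinuousLinearEquiv.neg ℂ)

lemma crEE_coe : ((crEE n c) : (CRX n c × CRY c) →L[ℂ] (CRX n c × CRY c))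
    = (ContinuousLinearMap.fst ℂ (CRX n c) (CRY c)).prod (-(crPmu n c)) := by
  ext p <;> simp [crEE, crPmu]

/-- Zero section: `H((0,0,ν),0) = 0`. -/
lemma crH_zsec (ν : CRY c) : crH φ ((0, 0, ν), 0) = 0 := by
  have hAB : crA φ (((0 : Fin n → ℂ), (0 : Fin n → ℂ), ν), (0 : CRY c))
      = crB φ (((0 : Fin n → ℂ), (0 : Fin n → ℂ), ν), (0 : CRY c)) := by
    simp [crA, crB]
  have hA : crA φ (((0 : Fin n → ℂ), (0 : Fin n → ℂ), ν), (0 : CRY c)) = φ (0, 0, ν) := by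
    simp [crA]
  have hB : crB φ (((0 : Fin n → ℂ), (0 : Fin n → ℂ), ν), (0 : CRY c)) = φ (0, 0, ν) := by
    simp [crB]
  funext j
  simp [crH, crN, hAB, hA, hB, Pi.smul_apply, Pi.add_apply, Pi.sub_apply, smul_eq_mul]
  ring

/-- Reality condition for `crH`. -/
lemma crH_real (hφ : AnalyticAt ℂ φ 0) (hφ0 : φ 0 = 0)
    (hreal : ∀ᶠ q in 𝓝 (0 : CRX n c), (fun j => conj (φ q j)) = φ (crSigma q)) :
    ∀ᶠ p in 𝓝 (0 : CRX n c × CRY c),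
      (fun j => conj (crH φ p j)) = crH φ (crSigma p.1, crCv p.2) := by
  have tN : Tendsto (crN φ) (𝓝 0) (𝓝 0) := by
    have h := (crN_an hφ).continuousAt
    rwa [ContinuousAt, crN_zero hφ0] at h
  have tA : Tendsto (⇑(crLA n c)) (𝓝 0) (𝓝 0) := (crLA n c).continuous.tendsto' 0 0 (map_zero _)
  have tB : Tendsto (⇑(crLB n c)) (𝓝 0) (𝓝 0) := (crLB n c).continuous.tendsto' 0 0 (map_zero _)
  filter_upwards [tN.eventually hreal, tA.eventually hreal, tB.eventually hreal] with p h1 h2 h3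
  have eA : crSigma ((0, 0, p.1.2.2 + Complex.I • p.2) : CRX n c)
      = ((0, 0, crCv p.1.2.2 - Complex.I • crCv p.2) : CRX n c) := by
    simp only [crSigma, crCv_zero]
    refine Prod.ext rfl (Prod.ext rfl ?_)
    funext k
    simp only [crCv, Pi.add_apply, Pi.sub_apply, Pi.smul_apply, smul_eq_mul, map_add, map_mul,
      Complex.conj_I]
    ring
  have eB : crSigma ((0, 0, p.1.2.2 - Complex.I • p.2) : CRX n c)
      = ((0, 0, crCv p.1.2.2 + Complex.I • crCv p.2) : CRX n c) := by
    simp only [crSigma, crCv_zero]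
    refine Prod.ext rfl (Prod.ext rfl ?_)
    funext k
    simp only [crCv, Pi.add_apply, Pi.sub_apply, Pi.smul_apply, smul_eq_mul, map_sub, map_mul,
      Complex.conj_I]
    ring
  have hcA : (fun j => conj (crA φ p j)) = crB φ (crSigma p.1, crCv p.2) := by
    have h2' : (fun j => conj (crA φ p j)) = φ (crSigma ((0, 0, p.1.2.2 + Complex.I • p.2)
        : CRX n c)) := h2
    rw [h2', eA]; rfl
  have hcB : (fun j => conj (crB φ p j)) = crA φ (crSigma p.1, crCv p.2) := by
    have h3' : (fun j => conj (crB φ p j)) = φ (crSigma ((0, 0, p.1.2.2 - Complex.I • p.2)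
        : CRX n c)) := h3
    rw [h3', eB]; rfl
  have hcN : crSigma (crN φ p) = crN φ (crSigma p.1, crCv p.2) := by
    have hr : crN φ (crSigma p.1, crCv p.2)
        = (crCv p.1.2.1, crCv p.1.1, crCv p.1.2.2 - (2 * Complex.I)⁻¹ •
            ((fun j => conj (crB φ p j)) - (fun j => conj (crA φ p j)))) := by
      simp only [crN]
      rw [← hcA, ← hcB]
      rfl
    rw [hr]
    simp only [crSigma, crN]
    refine Prod.ext rfl (Prod.ext rfl ?_)
    funext k
    simp only [crCv, Pi.sub_apply, Pi.smul_apply, smul_eq_mul, map_sub, map_mul]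
    rw [conj2Iinv]
    ring
  funext j
  have h1j := congrFun h1 j
  have hAj := congrFun hcA j
  have hBj := congrFun hcB j
  simp only [crH, Pi.sub_apply, Pi.smul_apply, Pi.add_apply, smul_eq_mul]
  rw [map_sub, map_sub, map_mul, map_add, conj2inv, h1j, hAj, hBj, hcN]
  have hcv : crCv p.2 j = conj (p.2 j) := rfl
  rw [← hcv]
  ring

/-- Membership computation for the graph condition. -/
lemma crH_mem (z : Fin n → ℂ) (w : Fin c → ℂ)
    (hr : (fun j => conj (φ (0, 0, w) j)) = φ (0, 0, fun k => conj (w k))) :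
    ((fun j => (((w j + Complex.I * φ (0, 0, w) j)).im : ℂ)) =
      φ (z, (fun i => conj (z i)), fun k => (((w k + Complex.I * φ (0, 0, w) k)).re : ℂ)))
    ↔ crH φ ((z, (fun i => conj (z i)), fun k => (((w k).re : ℝ) : ℂ)),
        fun j => (((w j).im : ℝ) : ℂ)) = 0 := by
  set x : CRX n c × CRY c :=
    ((z, (fun i => conj (z i)), fun k => (((w k).re : ℝ) : ℂ)), fun j => (((w j).im : ℝ) : ℂ))
    with hx
  have e1 : (fun k => (((w k).re : ℝ) : ℂ)) + Complex.I • (fun j => (((w j).im : ℝ) : ℂ)) = w := by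
    funext k
    simp only [Pi.add_apply, Pi.smul_apply, smul_eq_mul]
    rw [mul_comm]; exact Complex.re_add_im (w k)
  have e2 : (fun k => (((w k).re : ℝ) : ℂ)) - Complex.I • (fun j => (((w j).im : ℝ) : ℂ))
      = fun k => conj (w k) := by
    funext k
    simp only [Pi.sub_apply, Pi.smul_apply, smul_eq_mul]
    apply Complex.ext <;> simp
  have hax : crA φ x = φ (0, 0, w) := by
    simp only [crA, hx]; rw [e1]
  have hbx : crB φ x = fun j => conj (φ (0, 0, w) j) := by
    simp only [crB, hx]; rw [e2, ← hr]
  have hnx : crN φ x = (z, (fun i => conj (z i)),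
      fun k => (((w k + Complex.I * φ (0, 0, w) k)).re : ℂ)) := by
    simp only [crN, hx]
    refine Prod.ext rfl (Prod.ext rfl ?_)
    rw [hax, hbx]
    funext k
    simp only [Pi.sub_apply, Pi.smul_apply, smul_eq_mul]
    rw [Complex.sub_conj]
    have hre : (w k + Complex.I * φ (0, 0, w) k).re = (w k).re - (φ (0, 0, w) k).im := by
      simp; ring
    rw [hre]; push_cast; field_simp
  have hsx : (2:ℂ)⁻¹ • (crA φ x + crB φ x) = fun j => (((φ (0, 0, w) j).re : ℝ) : ℂ) := by
    rw [hax, hbx]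
    funext j
    simp only [Pi.smul_apply, Pi.add_apply, smul_eq_mul]
    rw [Complex.add_conj]; push_cast; ring
  have eL : (fun j => (((w j + Complex.I * φ (0, 0, w) j)).im : ℂ))
      = (fun j => (((w j).im : ℝ) : ℂ)) + fun j => (((φ (0, 0, w) j).re : ℝ) : ℂ) := by
    funext j
    have him : (w j + Complex.I * φ (0, 0, w) j).im = (w j).im + (φ (0, 0, w) j).re := by simp
    simp only [Pi.add_apply, him]; push_cast; ring
  have hgoal : crH φ x = 0 ↔ φ (crN φ x) = (2:ℂ)⁻¹ • (crA φ x + crB φ x) + x.2 := by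
    rw [crH, sub_sub, sub_eq_zero]
  rw [hgoal, hnx, hsx, eL]
  constructor
  · intro h
    rw [← h]
    funext j; simp [Pi.add_apply]; ring
  · intro h
    rw [h]
    funext j; simp [Pi.add_apply]; ring

/-- Local analytic inverse packaged as a partial homeomorphism. -/
lemma analytic_biholo {E : Type*} [NormedAddCommGroup E] [NormedSpace ℂ E]
    [CompleteSpace E] {f : E → E} {e : E ≃L[ℂ] E}
    (hf : AnalyticAt ℂ f 0) (hd : HasFDerivAt f (e : E →L[ℂ] E) 0) :
    ∃ Φ : OpenPartialHomeomorph E E, ⇑Φ = f ∧ 0 ∈ Φ.source ∧ AnalyticAt ℂ Φ.symm (f 0) := by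
  have hs : HasStrictFDerivAt f (e : E →L[ℂ] E) 0 := by
    have h := hf.hasStrictFDerivAt
    rwa [hd.fderiv] at h
  refine ⟨hs.toOpenPartialHomeomorph f, rfl, hs.mem_toOpenPartialHomeomorph_source, ?_⟩
  obtain ⟨p, hp⟩ := hf
  have hp1 : p 1 = (continuousMultilinearCurryFin1 ℂ E E).symm (e : E →L[ℂ] E) := by
    have h2 := hp.fderiv_eq
    rw [hd.fderiv] at h2
    rw [h2]
    simp
  have hps : HasFPowerSeriesAt (hs.toOpenPartialHomeomorph f) p 0 := by
    rw [hs.toOpenPartialHomeomorph_coe]; exact hp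
  have hsy := (hs.toOpenPartialHomeomorph f).hasFPowerSeriesAt_symm
    hs.mem_toOpenPartialHomeomorph_source hps hp1
  have hfa : (hs.toOpenPartialHomeomorph f) 0 = f 0 := rfl
  rw [hfa] at hsy
  exact hsy.analyticAt

end CRAux


set_option maxHeartbeats 1000000 in
/-- **Step I normalization.** For the CR-generic graph `M = {Im w = φ(z, conj z, Re w)}`,
the map `Ψ(z', w') = (z', w' + i·φ(0, 0, w'))` is a local biholomorphism fixing `0` with
identity differential at `0`, and `Ψ⁻¹(M)` coincides near the origin with a graph
`{Im w' = φ'(z', conj z', Re w')}` where `φ'` satisfies `φ'(0, 0, ν) ≡ 0`. -/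
theorem stmt_9 (n c : ℕ) (hn : 1 ≤ n) (hc : 1 ≤ c)
    (φ : ((Fin n → ℂ) × (Fin n → ℂ) × (Fin c → ℂ)) → (Fin c → ℂ))
    (hφ : AnalyticAt ℂ φ 0) (hφ0 : φ 0 = 0) (hDφ : fderiv ℂ φ 0 = 0)
    (hreal : ∀ᶠ p in 𝓝 (0 : (Fin n → ℂ) × (Fin n → ℂ) × (Fin c → ℂ)),
      (fun j => conj (φ p j)) =
        φ (fun i => conj (p.2.1 i), fun i => conj (p.1 i), fun j => conj (p.2.2 j)))
    (M : Set ((Fin n → ℂ) × (Fin c → ℂ)))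
    (hM : M = {zw | (fun j => ((zw.2 j).im : ℂ)) =
      φ (zw.1, fun i => conj (zw.1 i), fun k => ((zw.2 k).re : ℂ))})
    (Ψ : ((Fin n → ℂ) × (Fin c → ℂ)) → ((Fin n → ℂ) × (Fin c → ℂ)))
    (hΨdef : Ψ = fun p => (p.1, fun j => p.2 j + Complex.I * φ (0, 0, p.2) j)) :
    ∃ U U' : Set ((Fin n → ℂ) × (Fin c → ℂ)), U ∈ 𝓝 0 ∧ U' ∈ 𝓝 0 ∧
      AnalyticOnNhd ℂ Ψ U ∧
      Ψ 0 = 0 ∧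
      fderiv ℂ Ψ 0 = ContinuousLinearMap.id ℂ ((Fin n → ℂ) × (Fin c → ℂ)) ∧
      Set.InjOn Ψ U ∧
      Ψ '' U = U' ∧
      (∃ χ : ((Fin n → ℂ) × (Fin c → ℂ)) → ((Fin n → ℂ) × (Fin c → ℂ)),
        AnalyticOnNhd ℂ χ U' ∧ ∀ p ∈ U, χ (Ψ p) = p) ∧
      ∃ φ' : ((Fin n → ℂ) × (Fin n → ℂ) × (Fin c → ℂ)) → (Fin c → ℂ),
        AnalyticAt ℂ φ' 0 ∧ φ' 0 = 0 ∧ fderiv ℂ φ' 0 = 0 ∧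
        (∀ᶠ p in 𝓝 (0 : (Fin n → ℂ) × (Fin n → ℂ) × (Fin c → ℂ)),
          (fun j => conj (φ' p j)) =
            φ' (fun i => conj (p.2.1 i), fun i => conj (p.1 i), fun j => conj (p.2.2 j))) ∧
        (∀ᶠ ν in 𝓝 (0 : Fin c → ℂ), φ' (0, 0, ν) = 0) ∧
        (∀ᶠ zw in 𝓝 (0 : (Fin n → ℂ) × (Fin c → ℂ)),
          (Ψ zw ∈ M ↔ (fun j => ((zw.2 j).im : ℂ)) =
            φ' (zw.1, fun i => conj (zw.1 i), fun k => ((zw.2 k).re : ℂ)))) := by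
  classical
  -- basic facts about φ
  have hφd : HasFDerivAt φ (0 : CRX n c →L[ℂ] CRY c) 0 := by
    have h := hφ.differentiableAt.hasFDerivAt
    rwa [hDφ] at h
  have hreal' : ∀ᶠ q in 𝓝 (0 : CRX n c), (fun j => conj (φ q j)) = φ (crSigma q) :=
    hreal.mono fun q hq => hq
  -- Ψ : rewritten form
  have hΨeq : Ψ = fun p : (Fin n → ℂ) × (Fin c → ℂ) =>
      (p.1, p.2 + Complex.I • φ (0, 0, p.2)) := by
    rw [hΨdef]; funext p; exact Prod.ext rfl (by funext j; simp)
  have hφw : AnalyticAt ℂ (fun w : Fin c → ℂ => φ (0, 0, w)) 0 := by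
    have h : AnalyticAt ℂ (φ ∘ (fun w : Fin c → ℂ =>
        ((0, 0, w) : (Fin n → ℂ) × (Fin n → ℂ) × (Fin c → ℂ)))) 0 :=
      AnalyticAt.comp (by exact hφ) ((analyticAt_const (v := (0 : Fin n → ℂ))).prod
        ((analyticAt_const (v := (0 : Fin n → ℂ))).prod analyticAt_id))
    exact h
  have hφwd : HasFDerivAt (fun w : Fin c → ℂ => φ (0, 0, w))
      (0 : (Fin c → ℂ) →L[ℂ] (Fin c → ℂ)) 0 := by
    set Lc : (Fin c → ℂ) →L[ℂ] ((Fin n → ℂ) × (Fin n → ℂ) × (Fin c → ℂ)) :=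
      (0 : (Fin c → ℂ) →L[ℂ] (Fin n → ℂ)).prod
        ((0 : (Fin c → ℂ) →L[ℂ] (Fin n → ℂ)).prod (ContinuousLinearMap.id ℂ (Fin c → ℂ))) with hLc
    have h := HasFDerivAt.comp (x := (0 : Fin c → ℂ)) (g := φ) hφd Lc.hasFDerivAt
    rw [ContinuousLinearMap.zero_comp] at h
    exact h
  have hΨa : AnalyticAt ℂ Ψ 0 := by
    rw [hΨeq]
    apply analyticAt_fst.prod
    have h1 : AnalyticAt ℂ (fun p : (Fin n → ℂ) × (Fin c → ℂ) => φ (0, 0, p.2)) 0 := by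
      have h : AnalyticAt ℂ ((fun w : Fin c → ℂ => φ (0, 0, w)) ∘
          (fun p : (Fin n → ℂ) × (Fin c → ℂ) => p.2)) 0 :=
        AnalyticAt.comp (by exact hφw) analyticAt_snd
      exact h
    exact analyticAt_snd.add ((analyticAt_const (v := Complex.I)).smul h1)
  have hΨd : HasFDerivAt Ψ (ContinuousLinearMap.id ℂ ((Fin n → ℂ) × (Fin c → ℂ))) 0 := by
    rw [hΨeq]
    have h1 : HasFDerivAt (fun p : (Fin n → ℂ) × (Fin c → ℂ) => φ (0, 0, p.2))
        (0 : ((Fin n → ℂ) × (Fin c → ℂ)) →L[ℂ] (Fin c → ℂ)) 0 := by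
      have h := HasFDerivAt.comp (x := (0 : (Fin n → ℂ) × (Fin c → ℂ))) hφwd (hasFDerivAt_snd (𝕜 := ℂ) (p := (0 : (Fin n → ℂ) × (Fin c → ℂ))))
      rwa [ContinuousLinearMap.zero_comp] at h
    have h2 := h1.const_smul Complex.I
    rw [smul_zero] at h2
    have h3 := (hasFDerivAt_snd (𝕜 := ℂ) (p := (0 : (Fin n → ℂ) × (Fin c → ℂ)))).add h2
    rw [add_zero] at h3
    have h4 := HasFDerivAt.prodMk (hasFDerivAt_fst (𝕜 := ℂ) (p := (0 : (Fin n → ℂ) × (Fin c → ℂ)))) h3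
    rwa [ContinuousLinearMap.fst_prod_snd] at h4
  have hΨ0 : Ψ 0 = 0 := by
    rw [hΨeq]
    refine Prod.ext rfl ?_
    have h0 : φ ((0 : Fin n → ℂ), (0 : Fin n → ℂ), (0 : Fin c → ℂ)) = 0 := hφ0
    show (0 : Fin c → ℂ) + Complex.I • φ (0, 0, (0: Fin c → ℂ)) = 0
    rw [h0]; simp
  -- partial homeomorphism for Ψ
  obtain ⟨Φψ, hΦcoe, hΦsrc, hχ0⟩ := analytic_biholo
    (e := ContinuousLinearEquiv.refl ℂ ((Fin n → ℂ) × (Fin c → ℂ))) hΨa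
    (by rw [ContinuousLinearEquiv.coe_refl]; exact hΨd)
  rw [hΨ0] at hχ0
  obtain ⟨V0, hV0mem, hχV0⟩ := hχ0.exists_mem_nhds_analyticOnNhd
  obtain ⟨W0, hW0mem, hΨW0⟩ := hΨa.exists_mem_nhds_analyticOnNhd
  set V : Set ((Fin n → ℂ) × (Fin c → ℂ)) := interior V0 with hVdef
  set W : Set ((Fin n → ℂ) × (Fin c → ℂ)) := interior W0 with hWdef
  have hVo : IsOpen V := isOpen_interior
  have hWo : IsOpen W := isOpen_interior
  have hV0 : (0 : (Fin n → ℂ) × (Fin c → ℂ)) ∈ V := mem_interior_iff_mem_nhds.mpr hV0mem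
  have hW0 : (0 : (Fin n → ℂ) × (Fin c → ℂ)) ∈ W := mem_interior_iff_mem_nhds.mpr hW0mem
  have hχV : AnalyticOnNhd ℂ Φψ.symm V := fun x hx => hχV0 x (interior_subset hx)
  have hΨW : AnalyticOnNhd ℂ Ψ W := fun x hx => hΨW0 x (interior_subset hx)
  -- define U and U'
  set U : Set ((Fin n → ℂ) × (Fin c → ℂ)) :=
    W ∩ (Φψ.source ∩ Φψ ⁻¹' (V ∩ Φψ.target)) with hUdef
  have hUo : IsOpen U := hWo.inter (Φψ.isOpen_inter_preimage (hVo.inter Φψ.open_target))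
  have hΦ0 : Φψ 0 = 0 := by rw [show Φψ (0 : (Fin n → ℂ) × (Fin c → ℂ)) = Ψ 0 from
    congrFun hΦcoe 0, hΨ0]
  have h0tgtΨ : (0 : (Fin n → ℂ) × (Fin c → ℂ)) ∈ Φψ.target := by
    have h := Φψ.map_source hΦsrc
    rwa [hΦ0] at h
  have hU0 : (0 : (Fin n → ℂ) × (Fin c → ℂ)) ∈ U :=
    ⟨hW0, hΦsrc, by rw [Set.mem_preimage, hΦ0]; exact ⟨hV0, h0tgtΨ⟩⟩
  have hUsub : U ⊆ Φψ.source := fun p hp => hp.2.1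
  set U' : Set ((Fin n → ℂ) × (Fin c → ℂ)) := Ψ '' U with hU'def
  have hImg : Ψ '' U = Φψ '' U := by rw [hΦcoe]
  have hU'o : IsOpen U' := by
    rw [hU'def, hImg]
    exact Φψ.isOpen_image_of_subset_source hUo hUsub
  have hU'0 : (0 : (Fin n → ℂ) × (Fin c → ℂ)) ∈ U' := ⟨0, hU0, hΨ0⟩
  have hU'V : U' ⊆ V := by
    rintro q ⟨p, hp, rfl⟩
    have h := hp.2.2
    rw [Set.mem_preimage] at h
    have h2 : Φψ p = Ψ p := congrFun hΦcoe p
    rw [h2] at h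
    exact h.1
  -- the inverse map
  refine ⟨U, U', hUo.mem_nhds hU0, hU'o.mem_nhds hU'0, hΨW.mono (fun p hp => hp.1), hΨ0,
    hΨd.fderiv, ?_, rfl, ⟨Φψ.symm, hχV.mono hU'V, ?_⟩, ?_⟩
  · -- injectivity
    have h := Φψ.injOn.mono hUsub
    rwa [hΦcoe] at h
  · -- left inverse
    intro p hp
    have h := Φψ.left_inv (hUsub hp)
    rwa [congrFun hΦcoe p] at h
  -- now the implicit function φ'
  obtain ⟨Θ, hΘcoe, hΘsrc, hκ0⟩ := analytic_biholo (e := crEE n c) (crG_an hφ hφ0)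
    (by rw [crEE_coe]; exact crG_deriv hφd hφ0)
  rw [crG_zero hφ0] at hκ0
  set φp : CRX n c → CRY c := fun x => (Θ.symm (x, 0)).2 with hφpdef
  have hΘ0 : Θ (0 : CRX n c × CRY c) = 0 := by
    rw [show Θ (0 : CRX n c × CRY c) = crG φ 0 from congrFun hΘcoe 0, crG_zero hφ0]
  have h0tgt : (0 : CRX n c × CRY c) ∈ Θ.target := by
    have h := Θ.map_source hΘsrc
    rwa [hΘ0] at h
  have hκid : Θ.symm (0 : CRX n c × CRY c) = 0 := by
    have h := Θ.left_inv hΘsrc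
    rwa [hΘ0] at h
  -- uniqueness characterization
  have huniq : ∀ᶠ p in 𝓝 (0 : CRX n c × CRY c), (crH φ p = 0 ↔ p.2 = φp p.1) := by
    have hsev : ∀ᶠ p in 𝓝 (0 : CRX n c × CRY c), p ∈ Θ.source :=
      Θ.open_source.mem_nhds hΘsrc
    have htev : ∀ᶠ p in 𝓝 (0 : CRX n c × CRY c),
        ((p.1, (0 : CRY c)) : CRX n c × CRY c) ∈ Θ.target := by
      have hcont : Tendsto (fun p : CRX n c × CRY c => ((p.1, (0 : CRY c)) : CRX n c × CRY c))
          (𝓝 0) (𝓝 0) := by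
        have h : Continuous (fun p : CRX n c × CRY c => ((p.1, (0 : CRY c)) : CRX n c × CRY c)) :=
          continuous_fst.prodMk continuous_const
        exact h.tendsto' 0 0 rfl
      exact hcont.eventually (Θ.open_target.eventually_mem h0tgt)
    filter_upwards [hsev, htev] with p hps hpt
    constructor
    · intro h0
      have hGp : Θ p = ((p.1, (0 : CRY c)) : CRX n c × CRY c) := by
        rw [congrFun hΘcoe p]
        exact Prod.ext rfl h0
      have hlv := Θ.left_inv hps
      rw [hGp] at hlv
      exact (congrArg Prod.snd hlv).symm
    · intro h2
      have hrv := Θ.right_inv hpt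
      rw [congrFun hΘcoe (Θ.symm ((p.1, (0 : CRY c)) : CRX n c × CRY c))] at hrv
      have hq1 := congrArg Prod.fst hrv
      have hq2 := congrArg Prod.snd hrv
      have hq1' : (Θ.symm ((p.1, (0 : CRY c)) : CRX n c × CRY c)).1 = p.1 := hq1
      have hq2' : crH φ (Θ.symm ((p.1, (0 : CRY c)) : CRX n c × CRY c)) = 0 := hq2
      have hpq : p = Θ.symm ((p.1, (0 : CRY c)) : CRX n c × CRY c) :=
        Prod.ext hq1'.symm h2
      rw [hpq]
      exact hq2'
  -- analyticity of φp
  have hφpa : AnalyticAt ℂ φp 0 := by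
    have hinl : AnalyticAt ℂ (fun x : CRX n c => ((x, (0 : CRY c)) : CRX n c × CRY c)) 0 :=
      analyticAt_id.prod analyticAt_const
    have hκinl : AnalyticAt ℂ (Θ.symm ∘
        (fun x : CRX n c => ((x, (0 : CRY c)) : CRX n c × CRY c))) 0 :=
      AnalyticAt.comp (by exact hκ0) hinl
    have h : AnalyticAt ℂ ((fun q : CRX n c × CRY c => q.2) ∘ (Θ.symm ∘
        (fun x : CRX n c => ((x, (0 : CRY c)) : CRX n c × CRY c)))) 0 :=
      AnalyticAt.comp analyticAt_snd hκinl
    exact h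
  have hφp0 : φp 0 = 0 := by
    show (Θ.symm (((0 : CRX n c), (0 : CRY c)) : CRX n c × CRY c)).2 = 0
    rw [show ((((0 : CRX n c), (0 : CRY c))) : CRX n c × CRY c) = 0 from Prod.mk_zero_zero, hκid]
    rfl
  -- solution property
  have hev0 : ∀ᶠ x in 𝓝 (0 : CRX n c), crH φ (x, φp x) = 0 := by
    have ht : Tendsto (fun x : CRX n c => ((x, φp x) : CRX n c × CRY c)) (𝓝 0) (𝓝 0) := by
      have hc : ContinuousAt (fun x : CRX n c => ((x, φp x) : CRX n c × CRY c)) 0 :=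
        continuousAt_id.prodMk hφpa.continuousAt
      have hval : ((0 : CRX n c), φp 0) = (0 : CRX n c × CRY c) := by
        rw [hφp0]; exact Prod.mk_zero_zero
      rw [ContinuousAt, hval] at hc
      exact hc
    filter_upwards [ht.eventually huniq] with x hx
    exact hx.mpr rfl
  -- derivative of φp at 0 vanishes
  have hφpD : fderiv ℂ φp 0 = 0 := by
    have hD := hφpa.differentiableAt.hasFDerivAt
    have hb : (((0 : CRX n c), φp 0) : CRX n c × CRY c) = 0 := by
      rw [hφp0]; exact Prod.mk_zero_zero
    have hbase : HasFDerivAt (crH φ) (-(crPmu n c)) (((0 : CRX n c), φp 0) : CRX n c × CRY c) := by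
      rw [hb]
      exact crH_deriv hφd hφ0
    have h1' := HasFDerivAt.comp (x := (0 : CRX n c)) (g := crH φ) hbase
      (HasFDerivAt.prodMk (hasFDerivAt_id (0 : CRX n c)) hD)
    have h1 : HasFDerivAt (fun x : CRX n c => crH φ (x, φp x))
        ((-(crPmu n c)).comp ((ContinuousLinearMap.id ℂ (CRX n c)).prod (fderiv ℂ φp 0))) 0 := h1'
    have h2 : HasFDerivAt (fun x : CRX n c => crH φ (x, φp x))
        (0 : CRX n c →L[ℂ] CRY c) 0 := by
      refine (hasFDerivAt_const (0 : CRY c) (0 : CRX n c)).congr_of_eventuallyEq ?_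
      exact hev0.mono fun x hx => hx
    have hDeq := h2.unique h1
    refine ContinuousLinearMap.ext fun v => ?_
    have hv := congrArg (fun L : CRX n c →L[ℂ] CRY c => L v) hDeq
    simp only [ContinuousLinearMap.zero_apply, ContinuousLinearMap.comp_apply,
      ContinuousLinearMap.prod_apply, ContinuousLinearMap.id_apply,
      ContinuousLinearMap.neg_apply, crPmu, ContinuousLinearMap.coe_snd'] at hv
    have hv2 := hv.symm
    rw [neg_eq_zero] at hv2
    simpa using hv2
  -- continuity helpers
  have hcvc : ∀ m : ℕ, Continuous (crCv (m := m)) := fun m =>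
    continuous_pi fun j => Complex.continuous_conj.comp (continuous_apply j)
  have hσc : Continuous (crSigma (n := n) (c := c)) := by
    refine Continuous.prodMk ?_ (Continuous.prodMk ?_ ?_)
    · exact (hcvc n).comp (continuous_fst.comp continuous_snd)
    · exact (hcvc n).comp continuous_fst
    · exact (hcvc c).comp (continuous_snd.comp continuous_snd)
  have hσt : Tendsto (crSigma (n := n) (c := c)) (𝓝 0) (𝓝 0) :=
    hσc.tendsto' 0 0 crSigma_zero
  have hHreal := crH_real hφ hφ0 hreal'
  -- reality condition for φp
  have hφpreal : ∀ᶠ p in 𝓝 (0 : CRX n c), (fun j => conj (φp p j)) = φp (crSigma p) := by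
    have t1 : Tendsto (fun p : CRX n c => ((crSigma p, φp (crSigma p)) : CRX n c × CRY c))
        (𝓝 0) (𝓝 0) := by
      have h2 : Tendsto (fun p : CRX n c => φp (crSigma p)) (𝓝 0) (𝓝 (0 : CRY c)) := by
        have hφpt : Tendsto φp (𝓝 0) (𝓝 0) := by
          have h := hφpa.continuousAt
          rwa [ContinuousAt, hφp0] at h
        exact hφpt.comp hσt
      have h := hσt.prodMk_nhds h2
      exact h
    have t2 : Tendsto (fun p : CRX n c => ((p, crCv (φp (crSigma p))) : CRX n c × CRY c))
        (𝓝 0) (𝓝 0) := by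
      have hφpt : Tendsto φp (𝓝 0) (𝓝 0) := by
        have h := hφpa.continuousAt
        rwa [ContinuousAt, hφp0] at h
      have h2 : Tendsto (fun p : CRX n c => crCv (φp (crSigma p))) (𝓝 0) (𝓝 (0 : CRY c)) := by
        have h3 := ((hcvc c).tendsto' 0 0 crCv_zero).comp (hφpt.comp hσt)
        exact h3
      exact tendsto_id.prodMk_nhds h2
    filter_upwards [hσt.eventually hev0, t1.eventually hHreal, t2.eventually huniq]
      with p e1 e2 e3
    rw [crSigma_crSigma] at e2
    rw [e1] at e2
    have hH0' : crH φ (p, crCv (φp (crSigma p))) = 0 := by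
      rw [← e2]; funext j; simp
    have hkey : crCv (φp (crSigma p)) = φp p := e3.mp hH0'
    show crCv (φp p) = φp (crSigma p)
    rw [← hkey, crCv_crCv]
  -- finish: assemble φ' data
  refine ⟨φp, hφpa, hφp0, hφpD, hφpreal.mono (fun p hp => hp), ?_, ?_⟩
  · -- zero section
    have tz : Tendsto (fun ν : CRY c =>
        (((((0 : Fin n → ℂ), (0 : Fin n → ℂ), ν) : CRX n c), (0 : CRY c)) : CRX n c × CRY c))
        (𝓝 0) (𝓝 0) := by
      have hcont : Continuous (fun ν : CRY c =>
          (((((0 : Fin n → ℂ), (0 : Fin n → ℂ), ν) : CRX n c), (0 : CRY c)) : CRX n c × CRY c)) :=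
        ((continuous_const.prodMk (continuous_const.prodMk continuous_id)).prodMk
          continuous_const)
      refine hcont.tendsto' 0 0 ?_
      simp [Prod.ext_iff]
    filter_upwards [tz.eventually huniq] with ν hν
    exact (hν.mp (crH_zsec ν)).symm
  · -- membership equivalence
    have tw : Tendsto (fun zw : (Fin n → ℂ) × (Fin c → ℂ) =>
        (((0 : Fin n → ℂ), (0 : Fin n → ℂ), zw.2) : CRX n c)) (𝓝 0) (𝓝 0) := by
      have hcont : Continuous (fun zw : (Fin n → ℂ) × (Fin c → ℂ) =>
          (((0 : Fin n → ℂ), (0 : Fin n → ℂ), zw.2) : CRX n c)) :=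
        continuous_const.prodMk (continuous_const.prodMk continuous_snd)
      refine hcont.tendsto' 0 0 ?_
      simp [Prod.ext_iff]
    have tm : Tendsto (fun zw : (Fin n → ℂ) × (Fin c → ℂ) =>
        ((((zw.1, (fun i => conj (zw.1 i)), fun k => (((zw.2 k).re : ℝ) : ℂ)) : CRX n c),
          fun j => (((zw.2 j).im : ℝ) : ℂ)) : CRX n c × CRY c)) (𝓝 0) (𝓝 0) := by
      have hre : Continuous (fun zw : (Fin n → ℂ) × (Fin c → ℂ) =>
          (fun k => (((zw.2 k).re : ℝ) : ℂ) : Fin c → ℂ)) :=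
        continuous_pi fun k => Complex.continuous_ofReal.comp
          (Complex.continuous_re.comp ((continuous_apply k).comp continuous_snd))
      have him : Continuous (fun zw : (Fin n → ℂ) × (Fin c → ℂ) =>
          (fun j => (((zw.2 j).im : ℝ) : ℂ) : Fin c → ℂ)) :=
        continuous_pi fun j => Complex.continuous_ofReal.comp
          (Complex.continuous_im.comp ((continuous_apply j).comp continuous_snd))
      have hcj : Continuous (fun zw : (Fin n → ℂ) × (Fin c → ℂ) =>
          (fun i => conj (zw.1 i) : Fin n → ℂ)) :=
        continuous_pi fun i => Complex.continuous_conj.comp ((continuous_apply i).comp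
          continuous_fst)
      have hcont := ((continuous_fst.prodMk (hcj.prodMk hre)).prodMk him)
      refine hcont.tendsto' 0 0 ?_
      refine Prod.ext (Prod.ext rfl (Prod.ext ?_ ?_)) ?_ <;> funext j <;> simp
    filter_upwards [tm.eventually huniq, tw.eventually hreal'] with zw hu hr
    have hσw : crSigma (((0 : Fin n → ℂ), (0 : Fin n → ℂ), zw.2) : CRX n c)
        = ((0 : Fin n → ℂ), (0 : Fin n → ℂ), fun k => conj (zw.2 k)) := by
      refine Prod.ext ?_ (Prod.ext ?_ rfl)
      · funext i; simp [crSigma, crCv]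
      · funext i; simp [crSigma, crCv]
    rw [hσw] at hr
    rw [hM, hΨdef]
    simp only [Set.mem_setOf_eq]
    rw [crH_mem zw.1 zw.2 hr]
    exact hu
end

section
/- Let 𝕂 be ℝ or ℂ, let N ≥ 1 and let F : 𝕂^N → 𝕂 be analytic at the origin. Then there exist functions F_1, …, F_N, with F_k : 𝕂^k → 𝕂 analytic at the origin for each k, such that F(x_1, …, x_N) = F(0) + Σ_{k=1}^N x_k·F_k(x_1, …, x_k) for all x in a neighborhood of the origin of 𝕂^N. -/
open Filter Topology
open scoped ENNReal NNReal

namespace Stmt11Aux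

variable (𝕂 : Type) [RCLike 𝕂] (M : ℕ)

/-- Projection zeroing out the last coordinate. -/
noncomputable def Pz : (Fin (M+1) → 𝕂) →L[𝕂] (Fin (M+1) → 𝕂) :=
  ContinuousLinearMap.pi (fun j => if (j:ℕ) < M then ContinuousLinearMap.proj j else 0)

variable {𝕂 M}

lemma Pz_apply (y : Fin (M+1) → 𝕂) (j : Fin (M+1)) :
    Pz 𝕂 M y j = if (j:ℕ) < M then y j else 0 := by
  simp only [Pz, ContinuousLinearMap.pi_apply]
  split <;> simp_all

lemma norm_Pz_apply_le (y : Fin (M+1) → 𝕂) : ‖Pz 𝕂 M y‖ ≤ ‖y‖ := by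
  rw [pi_norm_le_iff_of_nonneg (norm_nonneg y)]
  intro j
  rw [Pz_apply]
  split
  · exact norm_le_pi_norm y j
  · simp

lemma norm_Pz_le : ‖(Pz 𝕂 M)‖ ≤ 1 := by
  refine ContinuousLinearMap.opNorm_le_bound _ zero_le_one (fun y => ?_)
  simpa using norm_Pz_apply_le y

/-- The last basis vector. -/
noncomputable def eL : Fin (M+1) → 𝕂 := Pi.single (Fin.last M) 1

lemma norm_eL_le : ‖(eL : Fin (M+1) → 𝕂)‖ ≤ 1 := by
  rw [pi_norm_le_iff_of_nonneg zero_le_one]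
  intro j
  rcases eq_or_ne j (Fin.last M) with h | h <;> simp [eL, h, Pi.single_apply]

lemma smul_eL (y : Fin (M+1) → 𝕂) : y (Fin.last M) • (eL : Fin (M+1) → 𝕂) = y - Pz 𝕂 M y := by
  funext j
  rcases eq_or_ne j (Fin.last M) with h | h
  · subst h; simp [eL, Pz_apply, Pi.single_apply]
  · have hne : (j:ℕ) ≠ M := fun hc => h (Fin.ext hc)
    have hj : (j:ℕ) < M := lt_of_le_of_ne (Nat.lt_succ_iff.mp j.isLt) hne
    simp [eL, Pz_apply, hj, Pi.single_apply, h]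


lemma key_arg {α : Type*} {m : ℕ} (i : Fin (m+1)) (u v a : α) :
    (fun t => (Fin.cons a (fun j : Fin m => if (j:ℕ) < (i:ℕ) then u else v) :
        Fin (m+1) → α) (i.cycleRange t))
      = Function.update (fun j : Fin (m+1) => if (j:ℕ) < (i:ℕ) then u else v) i a := by
  funext t
  refine Fin.succAboveCases i ?_ ?_ t
  · simp [Fin.cycleRange_self]
  · intro j
    rw [Fin.cycleRange_succAbove, Fin.cons_succ]
    rw [Function.update_of_ne (Fin.succAbove_ne i j)]
    have : ((i.succAbove j : Fin (m+1)) : ℕ) < (i:ℕ) ↔ (j:ℕ) < (i:ℕ) := by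
      rw [← Fin.lt_def, Fin.succAbove_lt_iff_castSucc_lt, Fin.lt_def, Fin.coe_castSucc]
    simp only [this]

variable (𝕂 M) in
/-- The series of the quotient `g` with `f = y_last * g`. -/
noncomputable def qser (p : FormalMultilinearSeries 𝕂 (Fin (M+1) → 𝕂) 𝕂) :
    FormalMultilinearSeries 𝕂 (Fin (M+1) → 𝕂) 𝕂 := fun m =>
  ∑ i : Fin (m+1),
    (((p (m+1)).domDomCongr (i.cycleRange : Equiv.Perm (Fin (m+1)))).curryLeft
        (eL : Fin (M+1) → 𝕂)).compContinuousLinearMap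
      (fun j : Fin m =>
        if (j:ℕ) < (i:ℕ) then Pz 𝕂 M else ContinuousLinearMap.id 𝕂 (Fin (M+1) → 𝕂))

lemma qser_apply_diag (p : FormalMultilinearSeries 𝕂 (Fin (M+1) → 𝕂) 𝕂) (m : ℕ)
    (y : Fin (M+1) → 𝕂) :
    qser 𝕂 M p m (fun _ => y)
      = ∑ i : Fin (m+1), p (m+1)
          (Function.update (fun j : Fin (m+1) => if (j:ℕ) < (i:ℕ) then Pz 𝕂 M y else y) i eL) := by
  rw [qser, ContinuousMultilinearMap.sum_apply]
  refine Finset.sum_congr rfl (fun i _ => ?_)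
  rw [ContinuousMultilinearMap.compContinuousLinearMap_apply,
    ContinuousMultilinearMap.curryLeft_apply, ContinuousMultilinearMap.domDomCongr_apply]
  have harg : (fun j : Fin m =>
      (if (j:ℕ) < (i:ℕ) then Pz 𝕂 M else ContinuousLinearMap.id 𝕂 (Fin (M+1) → 𝕂)) y)
      = fun j : Fin m => if (j:ℕ) < (i:ℕ) then Pz 𝕂 M y else y := by
    funext j; split <;> rfl
  rw [harg]
  exact congrArg _ (key_arg i (Pz 𝕂 M y) y eL)

lemma qser_norm_le (p : FormalMultilinearSeries 𝕂 (Fin (M+1) → 𝕂) 𝕂) (m : ℕ) :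
    ‖qser 𝕂 M p m‖ ≤ (m+1) * ‖p (m+1)‖ := by
  refine (norm_sum_le _ _).trans ?_
  have : ∀ i : Fin (m+1),
      ‖(((p (m+1)).domDomCongr (i.cycleRange : Equiv.Perm (Fin (m+1)))).curryLeft
          (eL : Fin (M+1) → 𝕂)).compContinuousLinearMap
        (fun j : Fin m =>
          if (j:ℕ) < (i:ℕ) then Pz 𝕂 M else ContinuousLinearMap.id 𝕂 (Fin (M+1) → 𝕂))‖
        ≤ ‖p (m+1)‖ := by
    intro i
    refine ContinuousMultilinearMap.opNorm_le_bound (norm_nonneg _) (fun v => ?_)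
    rw [ContinuousMultilinearMap.compContinuousLinearMap_apply,
      ContinuousMultilinearMap.curryLeft_apply, ContinuousMultilinearMap.domDomCongr_apply]
    refine ((p (m+1)).le_opNorm _).trans ?_
    refine mul_le_mul_of_nonneg_left ?_ (norm_nonneg _)
    have hperm : ∀ f : Fin (m+1) → ℝ, ∏ t, f (i.cycleRange t) = ∏ t, f t :=
      fun f => Equiv.prod_comp (i.cycleRange : Equiv.Perm (Fin (m+1))) f
    rw [hperm (fun s => ‖(Fin.cons eL (fun j : Fin m =>
      (if (j:ℕ) < (i:ℕ) then Pz 𝕂 M else ContinuousLinearMap.id 𝕂 (Fin (M+1) → 𝕂)) (v j)) :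
        Fin (m+1) → (Fin (M+1) → 𝕂)) s‖)]
    rw [Fin.prod_univ_succ]
    simp only [Fin.cons_zero, Fin.cons_succ]
    calc ‖(eL : Fin (M+1) → 𝕂)‖ * ∏ j : Fin m,
          ‖(if (j:ℕ) < (i:ℕ) then Pz 𝕂 M else ContinuousLinearMap.id 𝕂 (Fin (M+1) → 𝕂)) (v j)‖
        ≤ 1 * ∏ j : Fin m, ‖v j‖ := by
          refine mul_le_mul norm_eL_le ?_ (Finset.prod_nonneg (fun j _ => norm_nonneg _))
            zero_le_one
          refine Finset.prod_le_prod (fun j _ => norm_nonneg _) (fun j _ => ?_)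
          split
          · exact norm_Pz_apply_le (v j)
          · simp
      _ = ∏ j : Fin m, ‖v j‖ := one_mul _
  calc ∑ i : Fin (m+1), ‖(((p (m+1)).domDomCongr
          (i.cycleRange : Equiv.Perm (Fin (m+1)))).curryLeft
          (eL : Fin (M+1) → 𝕂)).compContinuousLinearMap
        (fun j : Fin m =>
          if (j:ℕ) < (i:ℕ) then Pz 𝕂 M else ContinuousLinearMap.id 𝕂 (Fin (M+1) → 𝕂))‖
      ≤ ∑ _i : Fin (m+1), ‖p (m+1)‖ := Finset.sum_le_sum (fun i _ => this i)
    _ = (m+1) * ‖p (m+1)‖ := by simp [Finset.sum_const, mul_comm]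


lemma key_telescope (p : FormalMultilinearSeries 𝕂 (Fin (M+1) → 𝕂) 𝕂)
    (hp0 : ∀ n (y : Fin (M+1) → 𝕂), p n (fun _ => Pz 𝕂 M y) = 0)
    (m : ℕ) (y : Fin (M+1) → 𝕂) :
    y (Fin.last M) * qser 𝕂 M p m (fun _ => y) = p (m+1) (fun _ => y) := by
  set A : ℕ → 𝕂 := fun t => p (m+1) (fun j : Fin (m+1) => if (j:ℕ) < t then Pz 𝕂 M y else y)
    with hA
  rw [qser_apply_diag, Finset.mul_sum]
  have hterm : ∀ i : Fin (m+1),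
      y (Fin.last M) * p (m+1)
        (Function.update (fun j : Fin (m+1) => if (j:ℕ) < (i:ℕ) then Pz 𝕂 M y else y) i eL)
      = A i - A ((i:ℕ)+1) := by
    intro i
    set B : Fin (m+1) → (Fin (M+1) → 𝕂) :=
      fun j => if (j:ℕ) < (i:ℕ) then Pz 𝕂 M y else y with hB
    have h1 : y (Fin.last M) * p (m+1) (Function.update B i eL)
        = p (m+1) (Function.update B i (y (Fin.last M) • (eL : Fin (M+1) → 𝕂))) := by
      rw [(p (m+1)).map_update_smul]
      simp [smul_eq_mul]
    rw [h1, smul_eL, (p (m+1)).map_update_sub]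
    have h2 : Function.update B i y = B := by
      have : y = B i := by simp [hB]
      rw [this, Function.update_eq_self]
    have h3 : Function.update B i (Pz 𝕂 M y)
        = fun j : Fin (m+1) => if (j:ℕ) < (i:ℕ)+1 then Pz 𝕂 M y else y := by
      funext j
      rcases eq_or_ne j i with h | h
      · subst h; simp [Function.update_self]
      · rw [Function.update_of_ne h, hB]
        have hne : (j:ℕ) ≠ (i:ℕ) := fun hc => h (Fin.ext hc)
        by_cases hlt : (j:ℕ) < (i:ℕ)
        · simp [hlt, Nat.lt_succ_of_lt hlt]
        · have : ¬ (j:ℕ) < (i:ℕ)+1 := by omega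
          simp [hlt, this]
    rw [h2, h3, hA]
  rw [Finset.sum_congr rfl (fun i _ => hterm i)]
  rw [Fin.sum_univ_eq_sum_range (fun t => A t - A (t+1))]
  rw [Finset.sum_range_sub' A]
  have hA0 : A 0 = p (m+1) (fun _ => y) := by simp [hA]
  have hAm : A (m+1) = 0 := by
    have : (fun j : Fin (m+1) => if (j:ℕ) < m+1 then Pz 𝕂 M y else y)
        = fun _ : Fin (m+1) => Pz 𝕂 M y := by
      funext j; simp [j.isLt]
    rw [hA]; simp only [this]; exact hp0 (m+1) y
  rw [hA0, hAm, sub_zero]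

lemma divide (f : (Fin (M+1) → 𝕂) → 𝕂) (hf : AnalyticAt 𝕂 f 0)
    (hv : ∀ y, f (Pz 𝕂 M y) = 0) :
    ∃ g : (Fin (M+1) → 𝕂) → 𝕂, AnalyticAt 𝕂 g 0 ∧
      ∀ᶠ y in 𝓝 (0 : Fin (M+1) → 𝕂), f y = y (Fin.last M) * g y := by
  obtain ⟨p, r, hp⟩ := hf
  -- the composed series represents `f ∘ Pz`
  set q' := p.compContinuousLinearMap (Pz 𝕂 M) with hq'
  have hq'norm : ∀ n, ‖q' n‖ ≤ ‖p n‖ := by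
    intro n
    refine (ContinuousMultilinearMap.norm_compContinuousLinearMap_le _ _).trans ?_
    have : ∏ _i : Fin n, ‖(Pz 𝕂 M)‖ ≤ 1 :=
      Finset.prod_le_one (fun _ _ => norm_nonneg _) (fun _ _ => norm_Pz_le)
    calc ‖p n‖ * ∏ _i : Fin n, ‖(Pz 𝕂 M)‖ ≤ ‖p n‖ * 1 :=
          mul_le_mul_of_nonneg_left this (norm_nonneg _)
      _ = ‖p n‖ := mul_one _
  have hradle : p.radius ≤ q'.radius := by
    refine ENNReal.le_of_forall_nnreal_lt (fun r' hr' => ?_)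
    obtain ⟨C, -, hC⟩ := p.norm_mul_pow_le_of_lt_radius hr'
    refine q'.le_radius_of_bound C (fun n => ?_)
    exact le_trans (mul_le_mul_of_nonneg_right (hq'norm n) (by positivity)) (hC n)
  have hcomp : HasFPowerSeriesOnBall (fun y => f (Pz 𝕂 M y)) q' 0 r :=
    { r_le := le_trans hp.r_le hradle
      r_pos := hp.r_pos
      hasSum := by
        intro y hy
        have hy' : Pz 𝕂 M y ∈ Metric.eball (0 : Fin (M+1) → 𝕂) r := by
          rw [Metric.mem_eball, edist_zero_right] at hy ⊢
          exact lt_of_le_of_lt (enorm_le_iff_norm_le.2 (norm_Pz_apply_le y)) hy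
        have h := hp.hasSum (by simpa using hy')
        simp only [zero_add] at h ⊢
        have heq : (fun n => q' n (fun _ => y)) = fun n => p n (fun _ => Pz 𝕂 M y) := by
          funext n
          rw [hq', FormalMultilinearSeries.compContinuousLinearMap_apply]
          rfl
        rw [heq]
        exact h }
  have hzero : HasFPowerSeriesAt (0 : (Fin (M+1) → 𝕂) → 𝕂) q' 0 :=
    (hcomp.hasFPowerSeriesAt).congr (Filter.Eventually.of_forall (fun y => hv y))
  have hp0 : ∀ n (y : Fin (M+1) → 𝕂), p n (fun _ => Pz 𝕂 M y) = 0 := by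
    intro n y
    have := hzero.apply_eq_zero n y
    rwa [hq', FormalMultilinearSeries.compContinuousLinearMap_apply] at this
  -- radius of `qser` is positive
  obtain ⟨r₁, hr₁pos, hr₁lt⟩ := ENNReal.lt_iff_exists_nnreal_btwn.1 hp.r_pos
  have hr₁rad : (r₁ : ℝ≥0∞) < p.radius := lt_of_lt_of_le hr₁lt hp.r_le
  obtain ⟨C, hCpos, hC⟩ := p.norm_mul_pow_le_of_lt_radius hr₁rad
  have hr₁pos' : (0:ℝ) < r₁ := by exact_mod_cast hr₁pos
  have hsum : Summable (fun m => ‖qser 𝕂 M p m‖ * ((r₁/2 : ℝ≥0) : ℝ) ^ m) := by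
    refine Summable.of_nonneg_of_le (fun m => by positivity) (fun m => ?_)
      ((((summable_pow_mul_geometric_of_norm_lt_one 1 (r := (1/2 : ℝ))
        (by norm_num)).add (summable_geometric_of_lt_one (r := (1/2:ℝ)) (by norm_num) (by norm_num))).mul_right
          (C / r₁)))
    push_cast
    have h1 : ‖qser 𝕂 M p m‖ * (r₁/2 : ℝ) ^ m ≤ ((m+1) * ‖p (m+1)‖) * (r₁/2 : ℝ)^m :=
      mul_le_mul_of_nonneg_right (qser_norm_le p m) (by positivity)
    refine h1.trans ?_
    have h2 : ((m:ℝ)+1) * ‖p (m+1)‖ * (r₁/2:ℝ)^m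
        = (((m:ℝ)) * (1/2)^m + (1/2)^m) * ((‖p (m+1)‖ * r₁^(m+1)) / r₁) := by
      field_simp
      ring
    rw [h2]
    have hX : (0:ℝ) ≤ ((m:ℝ))*(1/2)^m + (1/2)^m := by positivity
    have hd : (‖p (m+1)‖ * (r₁:ℝ)^(m+1)) / r₁ ≤ C / r₁ :=
      (div_le_div_iff_of_pos_right hr₁pos').mpr (hC (m+1))
    have := mul_le_mul_of_nonneg_left hd hX
    simpa [pow_one] using this
  have hqrad : 0 < (qser 𝕂 M p).radius := by
    have hle : ((r₁/2 : ℝ≥0) : ℝ≥0∞) ≤ (qser 𝕂 M p).radius :=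
      (qser 𝕂 M p).le_radius_of_summable hsum
    have hr₁0 : (0:ℝ≥0) < r₁ := by exact_mod_cast hr₁pos
    have h2 : (0:ℝ≥0) < r₁/2 := by positivity
    exact lt_of_lt_of_le (by exact_mod_cast h2) hle
  have hg : HasFPowerSeriesOnBall (qser 𝕂 M p).sum (qser 𝕂 M p) 0 (qser 𝕂 M p).radius :=
    (qser 𝕂 M p).hasFPowerSeriesOnBall hqrad
  refine ⟨(qser 𝕂 M p).sum, hg.hasFPowerSeriesAt.analyticAt, ?_⟩
  have hball : EMetric.ball (0 : Fin (M+1) → 𝕂) (min r (qser 𝕂 M p).radius) ∈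
      𝓝 (0 : Fin (M+1) → 𝕂) :=
    EMetric.ball_mem_nhds _ (lt_min hp.r_pos hqrad)
  refine Filter.eventually_of_mem hball (fun y hy => ?_)
  have hy1 : y ∈ Metric.eball (0 : Fin (M+1) → 𝕂) r :=
    EMetric.ball_subset_ball (min_le_left _ _) hy
  have hy2 : y ∈ EMetric.ball (0 : Fin (M+1) → 𝕂) (qser 𝕂 M p).radius :=
    EMetric.ball_subset_ball (min_le_right _ _) hy
  have hs1 : HasSum (fun n => p n (fun _ => y)) (f y) := by
    have := hp.hasSum (by simpa using hy1)
    simpa using this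
  have hs2 : HasSum (fun m => qser 𝕂 M p m (fun _ => y)) ((qser 𝕂 M p).sum y) :=
    (qser 𝕂 M p).hasSum hy2
  have hs3 : HasSum (fun m => p (m+1) (fun _ => y))
      (y (Fin.last M) * (qser 𝕂 M p).sum y) := by
    have := hs2.mul_left (y (Fin.last M))
    simpa only [key_telescope p hp0] using this
  have hs4 : HasSum (fun n => p n (fun _ => y))
      (y (Fin.last M) * (qser 𝕂 M p).sum y + ∑ i ∈ Finset.range 1, p i (fun _ => y)) :=
    (hasSum_nat_add_iff 1).1 hs3
  have hp00 : p 0 (fun _ => y) = 0 := by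
    have h := hp0 0 y
    have heq : (fun _ : Fin 0 => Pz 𝕂 M y) = (fun _ : Fin 0 => y) := funext fun j => j.elim0
    rw [heq] at h
    exact h
  rw [Finset.sum_range_one, hp00, add_zero] at hs4
  exact hs1.unique hs4


variable (𝕂) in
/-- Extension by zero. -/
noncomputable def uEx (N : ℕ) (k : Fin N) : (Fin (k.1+1) → 𝕂) →L[𝕂] (Fin N → 𝕂) :=
  ContinuousLinearMap.pi (fun j : Fin N =>
    if h : (j:ℕ) < k.1+1 then ContinuousLinearMap.proj (⟨(j:ℕ), h⟩ : Fin (k.1+1)) else 0)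

variable (𝕂) in
/-- Restriction to the first coordinates. -/
noncomputable def rEx (N : ℕ) (k : Fin N) : (Fin N → 𝕂) →L[𝕂] (Fin (k.1+1) → 𝕂) :=
  ContinuousLinearMap.pi (fun i : Fin (k.1+1) => ContinuousLinearMap.proj (Fin.castLE k.isLt i))

lemma uEx_apply {N : ℕ} (k : Fin N) (y : Fin (k.1+1) → 𝕂) (j : Fin N) :
    uEx 𝕂 N k y j = if h : (j:ℕ) < k.1+1 then y ⟨(j:ℕ), h⟩ else 0 := by
  simp only [uEx, ContinuousLinearMap.pi_apply]
  split <;> simp_all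

lemma rEx_apply {N : ℕ} (k : Fin N) (x : Fin N → 𝕂) (i : Fin (k.1+1)) :
    rEx 𝕂 N k x i = x (Fin.castLE k.isLt i) := rfl

lemma Pz_idem {M : ℕ} (y : Fin (M+1) → 𝕂) : Pz 𝕂 M (Pz 𝕂 M y) = Pz 𝕂 M y := by
  funext j
  rcases lt_or_ge (j:ℕ) M with h | h <;> simp [Pz_apply, h, Nat.not_lt_of_ge]

variable (𝕂) in
/-- Truncation of a vector. -/
def trunc (N : ℕ) (t : ℕ) (x : Fin N → 𝕂) : Fin N → 𝕂 :=
  fun j => if (j:ℕ) < t then x j else 0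

lemma uEx_rEx {N : ℕ} (k : Fin N) (x : Fin N → 𝕂) :
    uEx 𝕂 N k (rEx 𝕂 N k x) = trunc 𝕂 N (k.1+1) x := by
  funext j
  rw [uEx_apply, trunc]
  split
  · next h => rw [rEx_apply]; congr 1
  · rfl

lemma uEx_Pz_rEx {N : ℕ} (k : Fin N) (x : Fin N → 𝕂) :
    uEx 𝕂 N k (Pz 𝕂 k.1 (rEx 𝕂 N k x)) = trunc 𝕂 N k.1 x := by
  funext j
  rw [uEx_apply, trunc]
  split
  · next h =>
    rw [Pz_apply]
    by_cases hk : (j:ℕ) < k.1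
    · simp only [hk, if_true]
      rw [rEx_apply]; congr 1
    · simp [hk]
  · next h =>
    have : ¬ (j:ℕ) < k.1 := by omega
    simp [this]

end Stmt11Aux


open Stmt11Aux

/-- **Progressive factorization of a convergent power series.** An analytic germ
`F : 𝕂^N → 𝕂` at the origin (`𝕂 = ℝ` or `ℂ`) can be written
`F(x₁, …, x_N) = F(0) + Σ_{k=1}^N x_k·F_k(x₁, …, x_k)` with each `F_k` analytic at the
origin and depending only on the first `k` variables. -/
theorem stmt_11 (𝕂 : Type) [RCLike 𝕂] (N : ℕ) (hN : 1 ≤ N)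
    (F : (Fin N → 𝕂) → 𝕂) (hF : AnalyticAt 𝕂 F 0) :
    ∃ Fk : (k : Fin N) → ((Fin (k.1 + 1) → 𝕂) → 𝕂),
      (∀ k, AnalyticAt 𝕂 (Fk k) 0) ∧
      ∀ᶠ x in 𝓝 (0 : Fin N → 𝕂),
        F x = F 0 + ∑ k : Fin N, x k * Fk k (fun i => x (Fin.castLE k.isLt i)) := by
  have H : ∀ k : Fin N, ∃ g : (Fin (k.1+1) → 𝕂) → 𝕂, AnalyticAt 𝕂 g 0 ∧
      ∀ᶠ y in 𝓝 (0 : Fin (k.1+1) → 𝕂),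
        F (uEx 𝕂 N k y) - F (uEx 𝕂 N k (Pz 𝕂 k.1 y)) = y (Fin.last k.1) * g y := by
    intro k
    have hu : AnalyticAt 𝕂 (fun y : Fin (k.1+1) → 𝕂 => F (uEx 𝕂 N k y)) 0 := by
      have h1 : AnalyticAt 𝕂 F (uEx 𝕂 N k 0) := by rw [map_zero]; exact hF
      exact h1.comp ((uEx 𝕂 N k).analyticAt 0)
    have hu2 : AnalyticAt 𝕂 (fun y : Fin (k.1+1) → 𝕂 => F (uEx 𝕂 N k (Pz 𝕂 k.1 y))) 0 := by
      have h1 : AnalyticAt 𝕂 (fun z : Fin (k.1+1) → 𝕂 => F (uEx 𝕂 N k z))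
          (Pz 𝕂 k.1 (0 : Fin (k.1+1) → 𝕂)) := by
        rw [map_zero]; exact hu
      exact h1.comp ((Pz 𝕂 k.1).analyticAt 0)
    refine divide _ (hu.sub hu2) (fun y => ?_)
    rw [Pz_idem]
    ring
  choose g hg1 hg2 using H
  refine ⟨g, hg1, ?_⟩
  have hev : ∀ k : Fin N, ∀ᶠ x in 𝓝 (0 : Fin N → 𝕂),
      F (uEx 𝕂 N k (rEx 𝕂 N k x)) - F (uEx 𝕂 N k (Pz 𝕂 k.1 (rEx 𝕂 N k x)))
        = (rEx 𝕂 N k x) (Fin.last k.1) * g k (rEx 𝕂 N k x) := by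
    intro k
    have ht : Filter.Tendsto (rEx 𝕂 N k) (𝓝 0) (𝓝 0) := by
      have := (rEx 𝕂 N k).continuous.tendsto 0
      rwa [map_zero] at this
    exact ht.eventually (hg2 k)
  refine (Filter.eventually_all.2 hev).mono (fun x hx => ?_)
  have hterm : ∀ k : Fin N,
      x k * g k (fun i => x (Fin.castLE k.isLt i))
        = F (trunc 𝕂 N (k.1+1) x) - F (trunc 𝕂 N k.1 x) := by
    intro k
    have hrx : (fun i => x (Fin.castLE k.isLt i)) = rEx 𝕂 N k x := by
      funext i; rw [rEx_apply]
    have hlast : (rEx 𝕂 N k x) (Fin.last k.1) = x k := by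
      have hcl : Fin.castLE k.isLt (Fin.last k.1) = k := Fin.ext (by simp)
      rw [rEx_apply, hcl]
    rw [hrx, ← hlast, ← hx k, uEx_rEx, uEx_Pz_rEx]
  rw [Finset.sum_congr rfl (fun k _ => hterm k)]
  have htel : ∑ k : Fin N, (F (trunc 𝕂 N (k.1+1) x) - F (trunc 𝕂 N k.1 x))
      = F (trunc 𝕂 N N x) - F (trunc 𝕂 N 0 x) := by
    rw [Fin.sum_univ_eq_sum_range (fun t => F (trunc 𝕂 N (t+1) x) - F (trunc 𝕂 N t x))]
    exact Finset.sum_range_sub (fun t => F (trunc 𝕂 N t x)) N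
  rw [htel]
  have h1 : trunc 𝕂 N N x = x := by
    funext j; simp [trunc, j.isLt]
  have h2 : trunc 𝕂 N 0 x = 0 := by
    funext j; simp [trunc]
  rw [h1, h2]
  ring
end
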